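/- arXiv:0808.3033 — 3 statements merged into one kernel-verified Lean document; each statement's English description precedes it below -/
import Mathlib

section
/- Let R be a normalized root system in ℝⁿ with positive subsystem R₊, and let k : R → [0,∞) be W-invariant. Define, for x in the Weyl chamber C, δ̄(x) = (∏_{α∈R₊, k(α)≠1/2} ⟨α,x⟩^{1−2k(α)}) · log(∏_{α∈R₊, k(α)=1/2} ⟨α,x⟩). Then δ̄ is harmonic on C for the radial Dunkl generator: for every x ∈ C, (1/2)Δδ̄(x) + Σ_{α∈R₊} k(α)·⟨∇δ̄(x),α⟩/⟨x,α⟩ = 0. -/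
open scoped RealInnerProductSpace BigOperators

/-- Reflection `σ_α` with respect to the hyperplane orthogonal to `α`:
`σ_α(x) = x - 2(⟨α,x⟩/⟨α,α⟩)α`. -/
noncomputable def rootReflection {n : ℕ} (α x : EuclideanSpace ℝ (Fin n)) :
    EuclideanSpace ℝ (Fin n) :=
  x - (2 * ⟪α, x⟫ / ⟪α, α⟫) • α

/-- Euclidean Laplacian, as the sum of pure second derivatives in the coordinate directions. -/
noncomputable def laplacian {n : ℕ} (f : EuclideanSpace ℝ (Fin n) → ℝ)
    (x : EuclideanSpace ℝ (Fin n)) : ℝ :=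
  ∑ i : Fin n,
    iteratedFDeriv ℝ 2 f x ![EuclideanSpace.single i 1, EuclideanSpace.single i 1]

/-- `R` is a (restricted) root system in `ℝⁿ`: a finite set of nonzero vectors such that
`R ∩ ℝα = {α, -α}` and `σ_α(R) = R` for all `α ∈ R`. -/
def IsRootSystem {n : ℕ} (R : Finset (EuclideanSpace ℝ (Fin n))) : Prop :=
  (∀ α ∈ R, α ≠ 0) ∧ (∀ α ∈ R, -α ∈ R) ∧
    (∀ α ∈ R, ∀ c : ℝ, c • α ∈ R → c • α = α ∨ c • α = -α) ∧
    (∀ α ∈ R, ∀ β ∈ R, rootReflection α β ∈ R)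

/-- `Rp` is a positive subsystem of `R`: it contains exactly one of `α, -α` for each `α ∈ R`. -/
def IsPositiveSubsystem {n : ℕ} (R Rp : Finset (EuclideanSpace ℝ (Fin n))) : Prop :=
  Rp ⊆ R ∧ ∀ α ∈ R, Xor' (α ∈ Rp) (-α ∈ Rp)

open scoped Classical

namespace DBH
variable {n : ℕ}


lemma exists_inner_ne_zero (W : Finset (EuclideanSpace ℝ (Fin n))) :
    ∃ v : EuclideanSpace ℝ (Fin n), ∀ w ∈ W, w ≠ 0 → ⟪w, v⟫ ≠ 0 := by
  classical
  induction W using Finset.induction_on with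
  | empty => exact ⟨0, by simp⟩
  | @insert a s ha ih =>
    obtain ⟨v, hv⟩ := ih
    by_cases h0 : a = 0
    · refine ⟨v, ?_⟩
      intro w hw hwne
      rcases Finset.mem_insert.1 hw with rfl | hw
      · exact absurd h0 hwne
      · exact hv w hw hwne
    · by_cases hav : ⟪a, v⟫ ≠ 0
      · refine ⟨v, ?_⟩
        intro w hw hwne
        rcases Finset.mem_insert.1 hw with rfl | hw
        · exact hav
        · exact hv w hw hwne
      · push_neg at hav
        obtain ⟨ε, hε⟩ := Infinite.exists_notMem_finset
          (insert (0:ℝ) (s.image (fun u => -⟪u,v⟫ / ⟪u,a⟫)))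
        refine ⟨v + ε • a, ?_⟩
        have hε0 : ε ≠ 0 := fun h => hε (by simp [h])
        intro w hw hwne
        have hexp : ⟪w, v + ε • a⟫ = ⟪w, v⟫ + ε * ⟪w, a⟫ := by
          rw [inner_add_right, real_inner_smul_right]
        rcases Finset.mem_insert.1 hw with rfl | hw
        · rw [hexp, hav, zero_add]
          exact mul_ne_zero hε0 (fun h => hwne ((inner_self_eq_zero (𝕜 := ℝ)).1 h))
        · rw [hexp]
          intro hcon
          by_cases hwa : ⟪w, a⟫ = 0
          · rw [hwa, mul_zero, add_zero] at hcon
            exact hv w hw hwne hcon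
          · apply hε
            refine Finset.mem_insert_of_mem (Finset.mem_image.2 ⟨w, hw, ?_⟩)
            rw [div_eq_iff hwa]
            linarith [hcon]

/-- A function which is a linear combination of products of at most `D` linear forms,
vanishing on more than `D` pairwise non-proportional hyperplanes, is identically zero. -/
lemma poly_zero {ι : Type*} (T : Finset ι) (c : ι → ℝ)
    (m : ι → Finset (EuclideanSpace ℝ (Fin n)))
    (L : Finset (EuclideanSpace ℝ (Fin n))) (D : ℕ)
    (hm : ∀ t ∈ T, (m t).card ≤ D)
    (hL0 : ∀ δ ∈ L, δ ≠ 0)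
    (hLi : ∀ δ ∈ L, ∀ δ' ∈ L, δ ≠ δ' → ∀ r : ℝ, δ' ≠ r • δ)
    (hcard : D < L.card)
    (hvan : ∀ y : EuclideanSpace ℝ (Fin n), (∃ δ ∈ L, ⟪δ, y⟫ = 0) →
      ∑ t ∈ T, c t * ∏ γ ∈ m t, ⟪γ, y⟫ = 0) :
    ∀ x : EuclideanSpace ℝ (Fin n), ∑ t ∈ T, c t * ∏ γ ∈ m t, ⟪γ, x⟫ = 0 := by
  classical
  intro x
  by_cases hx : ∃ δ ∈ L, ⟪δ, x⟫ = 0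
  · exact hvan x hx
  push_neg at hx
  set W : Finset (EuclideanSpace ℝ (Fin n)) :=
    L ∪ ((L ×ˢ L).filter (fun pq => pq.1 ≠ pq.2)).image
      (fun pq => ⟪pq.1, x⟫ • pq.2 - ⟪pq.2, x⟫ • pq.1) with hW
  obtain ⟨v, hv⟩ := exists_inner_ne_zero W
  have hvL : ∀ δ ∈ L, ⟪δ, v⟫ ≠ 0 := fun δ hδ =>
    hv δ (Finset.mem_union_left _ hδ) (hL0 δ hδ)
  have hvpair : ∀ δ ∈ L, ∀ δ' ∈ L, δ ≠ δ' →
      ⟪δ, x⟫ * ⟪δ', v⟫ - ⟪δ', x⟫ * ⟪δ, v⟫ ≠ 0 := by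
    intro δ hδ δ' hδ' hne
    have hu : (⟪δ, x⟫ • δ' - ⟪δ', x⟫ • δ : EuclideanSpace ℝ (Fin n)) ≠ 0 := by
      intro h
      have : δ' = (⟪δ', x⟫ / ⟪δ, x⟫) • δ := by
        have hδx := hx δ hδ
        rw [sub_eq_zero] at h
        rw [div_eq_inv_mul, mul_smul, ← h, smul_smul, inv_mul_cancel₀ hδx, one_smul]
      exact hLi δ hδ δ' hδ' hne _ this
    have hmem : (⟪δ, x⟫ • δ' - ⟪δ', x⟫ • δ : EuclideanSpace ℝ (Fin n)) ∈ W := by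
      refine Finset.mem_union_right _ (Finset.mem_image.2 ⟨(δ, δ'), ?_, rfl⟩)
      exact Finset.mem_filter.2 ⟨Finset.mem_product.2 ⟨hδ, hδ'⟩, hne⟩
    have := hv _ hmem hu
    rwa [inner_sub_left, real_inner_smul_left, real_inner_smul_left] at this
  set Q : Polynomial ℝ :=
    ∑ t ∈ T, Polynomial.C (c t) *
      ∏ γ ∈ m t, (Polynomial.C ⟪γ, x⟫ + Polynomial.C ⟪γ, v⟫ * Polynomial.X) with hQ
  have heval : ∀ r : ℝ, Q.eval r = ∑ t ∈ T, c t * ∏ γ ∈ m t, ⟪γ, x + r • v⟫ := by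
    intro r
    rw [hQ, Polynomial.eval_finset_sum]
    refine Finset.sum_congr rfl (fun t ht => ?_)
    rw [Polynomial.eval_mul, Polynomial.eval_C, Polynomial.eval_prod]
    congr 1
    refine Finset.prod_congr rfl (fun γ hγ => ?_)
    rw [inner_add_right, real_inner_smul_right]
    simp only [Polynomial.eval_add, Polynomial.eval_mul, Polynomial.eval_C, Polynomial.eval_X]
    ring
  have hdeg : Q.natDegree ≤ D := by
    rw [hQ]
    refine Polynomial.natDegree_sum_le_of_forall_le _ _ (fun t ht => ?_)
    refine le_trans (Polynomial.natDegree_mul_le) ?_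
    rw [Polynomial.natDegree_C, zero_add]
    refine le_trans (Polynomial.natDegree_prod_le _ _) (le_trans ?_ (hm t ht))
    refine le_trans (Finset.sum_le_card_nsmul _ _ 1 (fun γ _ => ?_)) (by simp)
    refine le_trans (Polynomial.natDegree_add_le _ _) ?_
    rw [Polynomial.natDegree_C]
    exact max_le (Nat.zero_le _)
      (le_trans (Polynomial.natDegree_C_mul_le _ _) (le_of_eq Polynomial.natDegree_X))
  set s : Finset ℝ := L.image (fun δ => -(⟪δ, x⟫ / ⟪δ, v⟫)) with hs
  have hscard : s.card = L.card := by
    rw [hs]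
    refine Finset.card_image_of_injOn ?_
    intro δ hδ δ' hδ' heq
    by_contra hne
    have hδL : δ ∈ L := hδ
    have hδL' : δ' ∈ L := hδ'
    have h1 : ⟪δ, x⟫ / ⟪δ, v⟫ = ⟪δ', x⟫ / ⟪δ', v⟫ := neg_inj.1 heq
    have h2 := (div_eq_div_iff (hvL δ hδL) (hvL δ' hδL')).1 h1
    exact hvpair δ hδL δ' hδL' hne (by rw [h2, sub_self])
  have hQ0 : Q = 0 := by
    refine Polynomial.eq_zero_of_natDegree_lt_card_of_eval_eq_zero' Q s ?_ ?_
    · intro r hr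
      obtain ⟨δ, hδ, rfl⟩ := Finset.mem_image.1 hr
      rw [heval]
      refine hvan _ ⟨δ, hδ, ?_⟩
      rw [inner_add_right, real_inner_smul_right, neg_mul,
        div_mul_cancel₀ _ (hvL δ hδ), add_neg_cancel]
    · omega
  have h0 := heval 0
  rw [hQ0, Polynomial.eval_zero] at h0
  have : ∀ t ∈ T, c t * ∏ γ ∈ m t, ⟪γ, x + (0:ℝ) • v⟫ = c t * ∏ γ ∈ m t, ⟪γ, x⟫ := by
    intro t ht
    rw [zero_smul, add_zero]
  rw [Finset.sum_congr rfl this] at h0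
  exact h0.symm



lemma rr_eq {δ : EuclideanSpace ℝ (Fin n)} (hδ : ⟪δ, δ⟫ = (2:ℝ)) (x : EuclideanSpace ℝ (Fin n)) :
    rootReflection δ x = x - ⟪δ, x⟫ • δ := by
  have h : 2 * ⟪δ, x⟫ / ⟪δ, δ⟫ = ⟪δ, x⟫ := by rw [hδ]; ring
  rw [rootReflection, h]

lemma rr_inner {δ : EuclideanSpace ℝ (Fin n)} (hδ : ⟪δ, δ⟫ = (2:ℝ))
    (a y : EuclideanSpace ℝ (Fin n)) :
    ⟪rootReflection δ a, y⟫ = ⟪a, y⟫ - ⟪δ, a⟫ * ⟪δ, y⟫ := by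
  rw [rr_eq hδ, inner_sub_left, real_inner_smul_left]

lemma rr_selfadj {δ : EuclideanSpace ℝ (Fin n)} (hδ : ⟪δ, δ⟫ = (2:ℝ))
    (a y : EuclideanSpace ℝ (Fin n)) :
    ⟪rootReflection δ a, y⟫ = ⟪a, rootReflection δ y⟫ := by
  rw [rr_inner hδ a y, rr_eq hδ y, inner_sub_right, real_inner_smul_right,
    real_inner_comm δ a]
  ring

lemma rr_invol {δ : EuclideanSpace ℝ (Fin n)} (hδ : ⟪δ, δ⟫ = (2:ℝ))
    (a : EuclideanSpace ℝ (Fin n)) :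
    rootReflection δ (rootReflection δ a) = a := by
  rw [rr_eq hδ, rr_eq hδ, inner_sub_right, real_inner_smul_right, hδ]
  module

lemma rr_isom {δ : EuclideanSpace ℝ (Fin n)} (hδ : ⟪δ, δ⟫ = (2:ℝ))
    (a b : EuclideanSpace ℝ (Fin n)) :
    ⟪rootReflection δ a, rootReflection δ b⟫ = ⟪a, b⟫ := by
  rw [rr_selfadj hδ, rr_invol hδ]

lemma rr_self {δ : EuclideanSpace ℝ (Fin n)} (hδ : ⟪δ, δ⟫ = (2:ℝ)) :
    rootReflection δ δ = -δ := by
  rw [rr_eq hδ, hδ]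
  module

lemma rr_neg {δ : EuclideanSpace ℝ (Fin n)} (hδ : ⟪δ, δ⟫ = (2:ℝ))
    (a : EuclideanSpace ℝ (Fin n)) :
    rootReflection δ (-a) = -rootReflection δ a := by
  rw [rr_eq hδ, rr_eq hδ, inner_neg_right]
  module

lemma rr_fixed {δ y : EuclideanSpace ℝ (Fin n)} (hy : ⟪δ, y⟫ = 0) :
    rootReflection δ y = y := by
  rw [rootReflection, hy]
  simp

/-- one reflection step within `R` -/
def rrelStep {n : ℕ} (R : Finset (EuclideanSpace ℝ (Fin n)))
    (a b : EuclideanSpace ℝ (Fin n)) : Prop :=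
  a ∈ R ∧ ∃ δ ∈ R, b = rootReflection δ a

/-- chains of reflections within `R` -/
def rrel {n : ℕ} (R : Finset (EuclideanSpace ℝ (Fin n))) :
    EuclideanSpace ℝ (Fin n) → EuclideanSpace ℝ (Fin n) → Prop :=
  Relation.ReflTransGen (rrelStep R)

section RS
variable {R Rp : Finset (EuclideanSpace ℝ (Fin n))}
variable (hR : IsRootSystem R) (hnorm : ∀ α ∈ R, ⟪α, α⟫ = (2 : ℝ))
variable (hRp : IsPositiveSubsystem R Rp)


include hR in
lemma rrel_mem {a b : EuclideanSpace ℝ (Fin n)} (h : rrel R a b) (ha : a ∈ R) : b ∈ R := by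
  induction h with
  | refl => exact ha
  | tail h step ih =>
    obtain ⟨hb, δ, hδ, rfl⟩ := step
    exact hR.2.2.2 δ hδ _ ih

include hR hnorm in
lemma rrelStep_symm {a b : EuclideanSpace ℝ (Fin n)} (h : rrelStep R a b) : rrelStep R b a := by
  obtain ⟨ha, δ, hδ, rfl⟩ := h
  exact ⟨hR.2.2.2 δ hδ a ha, δ, hδ, (rr_invol (hnorm δ hδ) a).symm⟩

include hR hnorm in
lemma rrel_symm {a b : EuclideanSpace ℝ (Fin n)} (h : rrel R a b) : rrel R b a :=
  by
    haveI : Std.Symm (rrelStep R) := ⟨fun _ _ hs => rrelStep_symm hR hnorm hs⟩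
    exact (Relation.ReflTransGen.stdSymm (r := rrelStep R)).symm _ _ h

lemma rrel_trans {a b c : EuclideanSpace ℝ (Fin n)} (h : rrel R a b) (h' : rrel R b c) :
    rrel R a c := Relation.ReflTransGen.trans h h'

include hR in
lemma rrel_const (g : EuclideanSpace ℝ (Fin n) → ℝ)
    (hg : ∀ a ∈ R, ∀ δ ∈ R, g (rootReflection δ a) = g a)
    {a b : EuclideanSpace ℝ (Fin n)} (h : rrel R a b) (ha : a ∈ R) : g b = g a := by
  induction h with
  | refl => rfl
  | tail h step ih =>
    obtain ⟨hb, δ, hδ, rfl⟩ := step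
    rw [hg _ hb _ hδ, ih]

include hnorm in
lemma rrel_neg {a : EuclideanSpace ℝ (Fin n)} (ha : a ∈ R) : rrel R a (-a) :=
  Relation.ReflTransGen.single ⟨ha, a, ha, (rr_self (hnorm a ha)).symm⟩

/-- the positive part of the reflection class of `a` -/
noncomputable def pcl (R Rp : Finset (EuclideanSpace ℝ (Fin n)))
    (a : EuclideanSpace ℝ (Fin n)) : Finset (EuclideanSpace ℝ (Fin n)) :=
  Rp.filter (rrel R a)

lemma mem_pcl {a b : EuclideanSpace ℝ (Fin n)} :
    b ∈ pcl R Rp a ↔ b ∈ Rp ∧ rrel R a b := Finset.mem_filter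

include hR hnorm in
lemma pcl_eq {a b : EuclideanSpace ℝ (Fin n)} (h : rrel R a b) :
    pcl R Rp a = pcl R Rp b := by
  ext c
  simp only [mem_pcl, and_congr_right_iff]
  intro _
  exact ⟨fun h' => rrel_trans (rrel_symm hR hnorm h) h',
    fun h' => rrel_trans h h'⟩

include hR hnorm in
lemma pcl_disjoint {a b : EuclideanSpace ℝ (Fin n)} (h : ¬ rrel R a b)
    (hb : b ∈ Rp) : ∀ c ∈ pcl R Rp a, c ∉ pcl R Rp b := by
  intro c hc hcb
  rw [mem_pcl] at hc hcb
  exact h (rrel_trans hc.2 (rrel_symm hR hnorm hcb.2))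

/-- positive representative of the reflection of `γ` by `δ` -/
noncomputable def rpos (Rp : Finset (EuclideanSpace ℝ (Fin n)))
    (δ γ : EuclideanSpace ℝ (Fin n)) : EuclideanSpace ℝ (Fin n) :=
  if rootReflection δ γ ∈ Rp then rootReflection δ γ else -rootReflection δ γ

/-- sign of the reflection of `γ` by `δ` -/
noncomputable def sg (Rp : Finset (EuclideanSpace ℝ (Fin n)))
    (δ γ : EuclideanSpace ℝ (Fin n)) : ℝ :=
  if rootReflection δ γ ∈ Rp then 1 else -1

lemma inner_rpos (δ γ x : EuclideanSpace ℝ (Fin n)) :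
    ⟪rootReflection δ γ, x⟫ = sg Rp δ γ * ⟪rpos Rp δ γ, x⟫ := by
  rw [rpos, sg]
  by_cases h : rootReflection δ γ ∈ Rp
  · rw [if_pos h, if_pos h, one_mul]
  · rw [if_neg h, if_neg h, inner_neg_left]
    ring

lemma sg_mul_self (δ γ : EuclideanSpace ℝ (Fin n)) : sg Rp δ γ * sg Rp δ γ = 1 := by
  rw [sg]; by_cases h : rootReflection δ γ ∈ Rp <;> simp [h]

lemma inner_rpos_pair (δ α β : EuclideanSpace ℝ (Fin n)) (hδ : ⟪δ, δ⟫ = (2:ℝ)) :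
    ⟪α, β⟫ = sg Rp δ α * sg Rp δ β * ⟪rpos Rp δ α, rpos Rp δ β⟫ := by
  have h1 : ⟪rootReflection δ α, rootReflection δ β⟫ = ⟪α, β⟫ := rr_isom hδ α β
  rw [← h1, inner_rpos (Rp := Rp) δ α (rootReflection δ β),
    real_inner_comm (rootReflection δ β) (rpos Rp δ α),
    inner_rpos (Rp := Rp) δ β (rpos Rp δ α),
    real_inner_comm (rpos Rp δ α) (rpos Rp δ β)]
  ring

section Refl
variable {δ : EuclideanSpace ℝ (Fin n)} (hδRp : δ ∈ Rp)

include hR hRp hnorm hδRp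

lemma rpos_mem {γ : EuclideanSpace ℝ (Fin n)} (hγ : γ ∈ Rp) : rpos Rp δ γ ∈ Rp := by
  have hγR : γ ∈ R := hRp.1 hγ
  have hδR : δ ∈ R := hRp.1 hδRp
  have hrR : rootReflection δ γ ∈ R := hR.2.2.2 δ hδR γ hγR
  rw [rpos]
  by_cases h : rootReflection δ γ ∈ Rp
  · rwa [if_pos h]
  · rw [if_neg h]
    rcases hRp.2 _ hrR with ⟨h1, _⟩ | ⟨h1, _⟩
    · exact absurd h1 h
    · exact h1

lemma rpos_invol {γ : EuclideanSpace ℝ (Fin n)} (hγ : γ ∈ Rp) :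
    rpos Rp δ (rpos Rp δ γ) = γ := by
  have hδR : δ ∈ R := hRp.1 hδRp
  have h2 : ⟪δ, δ⟫ = (2:ℝ) := hnorm δ hδR
  by_cases h : rootReflection δ γ ∈ Rp
  · have e1 : rpos Rp δ γ = rootReflection δ γ := by rw [rpos, if_pos h]
    rw [e1, rpos, rr_invol h2, if_pos hγ]
  · have e1 : rpos Rp δ γ = -rootReflection δ γ := by rw [rpos, if_neg h]
    have hng : -γ ∉ Rp := by
      rcases hRp.2 γ (hRp.1 hγ) with ⟨_, h1⟩ | ⟨_, h1⟩
      · exact h1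
      · exact absurd hγ h1
    rw [e1, rpos, rr_neg h2, rr_invol h2, if_neg hng, neg_neg]

lemma rpos_inj {γ γ' : EuclideanSpace ℝ (Fin n)} (hγ : γ ∈ Rp) (hγ' : γ' ∈ Rp)
    (h : rpos Rp δ γ = rpos Rp δ γ') : γ = γ' := by
  have := congrArg (rpos Rp δ) h
  rwa [rpos_invol hR hnorm hRp hδRp hγ, rpos_invol hR hnorm hRp hδRp hγ'] at this

lemma rpos_pcl {a γ : EuclideanSpace ℝ (Fin n)} (hγ : γ ∈ pcl R Rp a) :
    rpos Rp δ γ ∈ pcl R Rp a := by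
  rw [mem_pcl] at hγ ⊢
  obtain ⟨hγp, hrel⟩ := hγ
  have hγR : γ ∈ R := hRp.1 hγp
  have hδR : δ ∈ R := hRp.1 hδRp
  have hstep : rrel R γ (rootReflection δ γ) :=
    Relation.ReflTransGen.single ⟨hγR, δ, hδR, rfl⟩
  refine ⟨rpos_mem hR hnorm hRp hδRp hγp, ?_⟩
  rw [rpos]
  by_cases h : rootReflection δ γ ∈ Rp
  · rw [if_pos h]; exact rrel_trans hrel hstep
  · rw [if_neg h]
    refine rrel_trans hrel (rrel_trans hstep (rrel_neg hnorm ?_))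
    exact hR.2.2.2 δ hδR γ hγR

/-- if the reflection of `γ ∈ Rp` by `δ` is `-γ` then `γ = δ` -/
lemma rpos_fixed {γ : EuclideanSpace ℝ (Fin n)} (hγ : γ ∈ Rp)
    (h : rootReflection δ γ = -γ) : γ = δ := by
  have hδR : δ ∈ R := hRp.1 hδRp
  have hγR : γ ∈ R := hRp.1 hγ
  have h2 : ⟪δ, δ⟫ = (2:ℝ) := hnorm δ hδR
  rw [rr_eq h2] at h
  have h3 : (2:ℝ) • γ = ⟪δ, γ⟫ • δ := by
    have h5 := sub_eq_iff_eq_add.mp h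
    rw [two_smul]
    calc γ + γ = (-γ + ⟪δ, γ⟫ • δ) + γ := by rw [← h5]
    _ = ⟪δ, γ⟫ • δ := by abel
  have hsm : γ = (⟪δ, γ⟫ / 2) • δ := by
    rw [div_eq_inv_mul, mul_smul, ← h3, smul_smul]
    norm_num
  rcases hR.2.2.1 δ hδR (⟪δ, γ⟫ / 2) (by rw [← hsm]; exact hγR) with hc | hc
  · rw [← hsm] at hc; exact hc
  · exfalso
    rw [← hsm] at hc
    rcases hRp.2 δ hδR with ⟨_, h1⟩ | ⟨_, h1⟩
    · rw [hc] at hγ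
      exact h1 hγ
    · exact h1 hδRp


lemma sg_mul_rpos {γ : EuclideanSpace ℝ (Fin n)} (hγ : γ ∈ Rp) :
    sg Rp δ γ * sg Rp δ (rpos Rp δ γ) = 1 := by
  have hδR : δ ∈ R := hRp.1 hδRp
  have h2 : ⟪δ, δ⟫ = (2:ℝ) := hnorm δ hδR
  by_cases h : rootReflection δ γ ∈ Rp
  · have e1 : rpos Rp δ γ = rootReflection δ γ := by rw [rpos, if_pos h]
    have e2 : sg Rp δ γ = 1 := by rw [sg, if_pos h]
    rw [e1, e2, one_mul, sg, rr_invol h2, if_pos hγ]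
  · have e1 : rpos Rp δ γ = -rootReflection δ γ := by rw [rpos, if_neg h]
    have e2 : sg Rp δ γ = -1 := by rw [sg, if_neg h]
    have hng : -γ ∉ Rp := by
      rcases hRp.2 γ (hRp.1 hγ) with ⟨_, h1⟩ | ⟨_, h1⟩
      · exact h1
      · exact absurd hγ h1
    rw [e1, e2, sg, rr_neg h2, rr_invol h2, if_neg hng]
    ring

lemma rpos_ne_of_erase {γ : EuclideanSpace ℝ (Fin n)} (hγ : γ ∈ Rp)
    (h : rpos Rp δ γ = γ) (hne : γ ≠ δ) : sg Rp δ γ = 1 := by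
  rw [sg]
  by_cases hc : rootReflection δ γ ∈ Rp
  · rw [if_pos hc]
  · exfalso
    have e1 : rpos Rp δ γ = -rootReflection δ γ := by rw [rpos, if_neg hc]
    rw [e1] at h
    exact hne (rpos_fixed hR hnorm hRp hδRp hγ (neg_eq_iff_eq_neg.mp h))

/-- parity of the number of sign flips of a positive class under a reflection -/
lemma prod_sg_pcl {a : EuclideanSpace ℝ (Fin n)} (ha : a ∈ Rp) :
    ∏ γ ∈ pcl R Rp a, sg Rp δ γ = if rrel R a δ then (-1:ℝ) else 1 := by
  have hδR : δ ∈ R := hRp.1 hδRp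
  have h2 : ⟪δ, δ⟫ = (2:ℝ) := hnorm δ hδR
  have hnegδ : -δ ∉ Rp := by
    rcases hRp.2 δ hδR with ⟨_, h1⟩ | ⟨_, h1⟩
    · exact h1
    · exact absurd hδRp h1
  by_cases hrel : rrel R a δ
  · rw [if_pos hrel]
    have hδP : δ ∈ pcl R Rp a := mem_pcl.2 ⟨hδRp, hrel⟩
    rw [← Finset.mul_prod_erase _ _ hδP]
    have hsgδ : sg Rp δ δ = -1 := by
      rw [sg, rr_self h2, if_neg hnegδ]
    have hrest : ∏ γ ∈ (pcl R Rp a).erase δ, sg Rp δ γ = 1 := by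
      refine Finset.prod_involution (fun γ _ => rpos Rp δ γ) ?_ ?_ ?_ ?_
      · intro γ hγ
        exact sg_mul_rpos hR hnorm hRp hδRp (mem_pcl.1 (Finset.mem_of_mem_erase hγ)).1
      · intro γ hγ hsg heq
        have hγRp := (mem_pcl.1 (Finset.mem_of_mem_erase hγ)).1
        exact hsg (rpos_ne_of_erase hR hnorm hRp hδRp hγRp heq (Finset.ne_of_mem_erase hγ))
      · intro γ hγ
        have hγP := Finset.mem_of_mem_erase hγ
        have hγRp := (mem_pcl.1 hγP).1
        refine Finset.mem_erase.2 ⟨?_, rpos_pcl hR hnorm hRp hδRp hγP⟩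
        intro hcon
        have hδpos : rpos Rp δ δ = δ := by
          rw [rpos, rr_self h2, if_neg hnegδ, neg_neg]
        have := congrArg (rpos Rp δ) hcon
        rw [rpos_invol hR hnorm hRp hδRp hγRp, hδpos] at this
        exact Finset.ne_of_mem_erase hγ this
      · intro γ hγ
        exact rpos_invol hR hnorm hRp hδRp (mem_pcl.1 (Finset.mem_of_mem_erase hγ)).1
    rw [hrest, hsgδ, mul_one]
  · rw [if_neg hrel]
    refine Finset.prod_involution (fun γ _ => rpos Rp δ γ) ?_ ?_ ?_ ?_
    · intro γ hγ
      exact sg_mul_rpos hR hnorm hRp hδRp (mem_pcl.1 hγ).1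
    · intro γ hγ hsg heq
      have hγRp := (mem_pcl.1 hγ).1
      refine hsg (rpos_ne_of_erase hR hnorm hRp hδRp hγRp heq ?_)
      intro hcon
      rw [hcon] at hγ
      exact hrel (mem_pcl.1 hγ).2
    · intro γ hγ
      exact rpos_pcl hR hnorm hRp hδRp hγ
    · intro γ hγ
      exact rpos_invol hR hnorm hRp hδRp (mem_pcl.1 hγ).1

/-- transport of a product of linear forms under a reflection -/
lemma prod_rpos_map (S T : Finset (EuclideanSpace ℝ (Fin n)))
    (hS : ∀ γ ∈ S, γ ∈ Rp) (hT : ∀ γ ∈ T, γ ∈ Rp)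
    (hST : ∀ γ ∈ S, rpos Rp δ γ ∈ T) (hTS : ∀ γ ∈ T, rpos Rp δ γ ∈ S)
    (y : EuclideanSpace ℝ (Fin n)) :
    ∏ γ ∈ S, ⟪γ, rootReflection δ y⟫ =
      (∏ γ ∈ S, sg Rp δ γ) * ∏ γ ∈ T, ⟪γ, y⟫ := by
  have hδR : δ ∈ R := hRp.1 hδRp
  have h2 : ⟪δ, δ⟫ = (2:ℝ) := hnorm δ hδR
  have step1 : ∀ γ ∈ S, ⟪γ, rootReflection δ y⟫ = sg Rp δ γ * ⟪rpos Rp δ γ, y⟫ := by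
    intro γ hγ
    rw [← rr_selfadj h2, inner_rpos]
  rw [Finset.prod_congr rfl step1, Finset.prod_mul_distrib]
  congr 1
  refine Finset.prod_nbij' (fun γ => rpos Rp δ γ) (fun γ => rpos Rp δ γ)
    hST hTS ?_ ?_ ?_
  · intro γ hγ
    exact rpos_invol hR hnorm hRp hδRp (hS γ hγ)
  · intro γ hγ
    exact rpos_invol hR hnorm hRp hδRp (hT γ hγ)
  · intro γ hγ
    rfl


lemma prod_sg_sub {P S : Finset (EuclideanSpace ℝ (Fin n))} {q1 q2 : EuclideanSpace ℝ (Fin n)}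
    (hq1 : q1 ∈ P) (hq2 : q2 ∈ P.erase q1) (hS : S = (P.erase q1).erase q2) :
    ∏ γ ∈ S, sg Rp δ γ = sg Rp δ q1 * sg Rp δ q2 * ∏ γ ∈ P, sg Rp δ γ := by
  have e1 : ∏ γ ∈ P, sg Rp δ γ = sg Rp δ q1 * ∏ γ ∈ P.erase q1, sg Rp δ γ :=
    (Finset.mul_prod_erase _ _ hq1).symm
  have e2 : ∏ γ ∈ P.erase q1, sg Rp δ γ = sg Rp δ q2 * ∏ γ ∈ S, sg Rp δ γ := by
    rw [hS]
    exact (Finset.mul_prod_erase _ _ hq2).symm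
  rw [e1, e2]
  have h1 := sg_mul_self (Rp := Rp) δ q1
  have h2 := sg_mul_self (Rp := Rp) δ q2
  calc ∏ γ ∈ S, sg Rp δ γ
      = (sg Rp δ q1 * sg Rp δ q1) * ((sg Rp δ q2 * sg Rp δ q2) * ∏ γ ∈ S, sg Rp δ γ) := by
        rw [h1, h2]; ring
    _ = sg Rp δ q1 * sg Rp δ q2 * (sg Rp δ q1 * (sg Rp δ q2 * ∏ γ ∈ S, sg Rp δ γ)) := by ring

lemma prod_sg_sub1 {P S : Finset (EuclideanSpace ℝ (Fin n))} {q1 : EuclideanSpace ℝ (Fin n)}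
    (hq1 : q1 ∈ P) (hS : S = P.erase q1) :
    ∏ γ ∈ S, sg Rp δ γ = sg Rp δ q1 * ∏ γ ∈ P, sg Rp δ γ := by
  have e1 : ∏ γ ∈ P, sg Rp δ γ = sg Rp δ q1 * ∏ γ ∈ S, sg Rp δ γ := by
    rw [hS]; exact (Finset.mul_prod_erase _ _ hq1).symm
  rw [e1]
  have h1 := sg_mul_self (Rp := Rp) δ q1
  calc ∏ γ ∈ S, sg Rp δ γ
      = (sg Rp δ q1 * sg Rp δ q1) * ∏ γ ∈ S, sg Rp δ γ := by rw [h1]; ring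
    _ = sg Rp δ q1 * (sg Rp δ q1 * ∏ γ ∈ S, sg Rp δ γ) := by ring

lemma G1_reflect {a : EuclideanSpace ℝ (Fin n)} (ha : a ∈ Rp)
    (y : EuclideanSpace ℝ (Fin n)) :
    ∑ q ∈ ((pcl R Rp a) ×ˢ (pcl R Rp a)).filter (fun q => q.1 ≠ q.2),
        ⟪q.1, q.2⟫ * ∏ γ ∈ ((pcl R Rp a).erase q.1).erase q.2, ⟪γ, rootReflection δ y⟫
      = (if rrel R a δ then (-1:ℝ) else 1) *
        ∑ q ∈ ((pcl R Rp a) ×ˢ (pcl R Rp a)).filter (fun q => q.1 ≠ q.2),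
          ⟪q.1, q.2⟫ * ∏ γ ∈ ((pcl R Rp a).erase q.1).erase q.2, ⟪γ, y⟫ := by
  have hδR : δ ∈ R := hRp.1 hδRp
  have h2 : ⟪δ, δ⟫ = (2:ℝ) := hnorm δ hδR
  set P := pcl R Rp a with hP
  have hmemRp : ∀ γ ∈ P, γ ∈ Rp := fun γ hγ => (mem_pcl.1 hγ).1
  rw [Finset.mul_sum]
  refine Finset.sum_nbij' (fun q => (rpos Rp δ q.1, rpos Rp δ q.2))
    (fun q => (rpos Rp δ q.1, rpos Rp δ q.2)) ?_ ?_ ?_ ?_ ?_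
  · intro q hq
    obtain ⟨hqm, hqne⟩ := Finset.mem_filter.1 hq
    obtain ⟨h1, h2'⟩ := Finset.mem_product.1 hqm
    refine Finset.mem_filter.2 ⟨Finset.mem_product.2
      ⟨rpos_pcl hR hnorm hRp hδRp h1, rpos_pcl hR hnorm hRp hδRp h2'⟩, ?_⟩
    intro hcon
    exact hqne (rpos_inj hR hnorm hRp hδRp (hmemRp _ h1) (hmemRp _ h2') hcon)
  · intro q hq
    obtain ⟨hqm, hqne⟩ := Finset.mem_filter.1 hq
    obtain ⟨h1, h2'⟩ := Finset.mem_product.1 hqm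
    refine Finset.mem_filter.2 ⟨Finset.mem_product.2
      ⟨rpos_pcl hR hnorm hRp hδRp h1, rpos_pcl hR hnorm hRp hδRp h2'⟩, ?_⟩
    intro hcon
    exact hqne (rpos_inj hR hnorm hRp hδRp (hmemRp _ h1) (hmemRp _ h2') hcon)
  · intro q hq
    obtain ⟨hqm, _⟩ := Finset.mem_filter.1 hq
    obtain ⟨h1, h2'⟩ := Finset.mem_product.1 hqm
    ext <;> simp [rpos_invol hR hnorm hRp hδRp (hmemRp _ h1),
      rpos_invol hR hnorm hRp hδRp (hmemRp _ h2')]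
  · intro q hq
    obtain ⟨hqm, _⟩ := Finset.mem_filter.1 hq
    obtain ⟨h1, h2'⟩ := Finset.mem_product.1 hqm
    ext <;> simp [rpos_invol hR hnorm hRp hδRp (hmemRp _ h1),
      rpos_invol hR hnorm hRp hδRp (hmemRp _ h2')]
  · intro q hq
    obtain ⟨hqm, hqne⟩ := Finset.mem_filter.1 hq
    obtain ⟨h1, h2'⟩ := Finset.mem_product.1 hqm
    have hq2e : q.2 ∈ P.erase q.1 := Finset.mem_erase.2 ⟨fun h => hqne h.symm, h2'⟩
    -- transport the product
    have hprod := prod_rpos_map hR hnorm hRp hδRp ((P.erase q.1).erase q.2)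
      ((P.erase (rpos Rp δ q.1)).erase (rpos Rp δ q.2)) ?_ ?_ ?_ ?_ y
    · rw [hprod, prod_sg_sub hR hnorm hRp hδRp h1 hq2e rfl, prod_sg_pcl hR hnorm hRp hδRp ha,
        inner_rpos_pair (Rp := Rp) δ q.1 q.2 h2]
      have hs1 := sg_mul_self (Rp := Rp) δ q.1
      have hs2 := sg_mul_self (Rp := Rp) δ q.2
      set J := ⟪rpos Rp δ q.1, rpos Rp δ q.2⟫
      set Pr2 := ∏ γ ∈ (P.erase (rpos Rp δ q.1)).erase (rpos Rp δ q.2), ⟪γ, y⟫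
      set e := if rrel R a δ then (-1:ℝ) else 1
      calc sg Rp δ q.1 * sg Rp δ q.2 * J * (sg Rp δ q.1 * sg Rp δ q.2 * e * Pr2)
          = (sg Rp δ q.1 * sg Rp δ q.1) * ((sg Rp δ q.2 * sg Rp δ q.2) * (e * (J * Pr2))) := by
            ring
        _ = e * (J * Pr2) := by rw [hs1, hs2]; ring
    · intro γ hγ
      exact hmemRp _ (Finset.mem_of_mem_erase (Finset.mem_of_mem_erase hγ))
    · intro γ hγ
      exact hmemRp _ (Finset.mem_of_mem_erase (Finset.mem_of_mem_erase hγ))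
    · intro γ hγ
      obtain ⟨hne2, hγ'⟩ := Finset.mem_erase.1 hγ
      obtain ⟨hne1, hγP⟩ := Finset.mem_erase.1 hγ'
      have hγRp := hmemRp _ hγP
      refine Finset.mem_erase.2 ⟨?_, Finset.mem_erase.2 ⟨?_, rpos_pcl hR hnorm hRp hδRp hγP⟩⟩
      · intro hcon
        exact hne2 (rpos_inj hR hnorm hRp hδRp hγRp (hmemRp _ h2') hcon)
      · intro hcon
        exact hne1 (rpos_inj hR hnorm hRp hδRp hγRp (hmemRp _ h1) hcon)
    · intro γ hγ
      obtain ⟨hne2, hγ'⟩ := Finset.mem_erase.1 hγ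
      obtain ⟨hne1, hγP⟩ := Finset.mem_erase.1 hγ'
      have hγRp := hmemRp _ hγP
      refine Finset.mem_erase.2 ⟨?_, Finset.mem_erase.2 ⟨?_, rpos_pcl hR hnorm hRp hδRp hγP⟩⟩
      · intro hcon
        apply hne2
        have := congrArg (rpos Rp δ) hcon
        rwa [rpos_invol hR hnorm hRp hδRp hγRp] at this
      · intro hcon
        apply hne1
        have := congrArg (rpos Rp δ) hcon
        rwa [rpos_invol hR hnorm hRp hδRp hγRp] at this


lemma G2_reflect {a b : EuclideanSpace ℝ (Fin n)} (ha : a ∈ Rp) (hb : b ∈ Rp)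
    (y : EuclideanSpace ℝ (Fin n)) :
    ∑ q ∈ (pcl R Rp a) ×ˢ (pcl R Rp b),
        ⟪q.1, q.2⟫ * ((∏ γ ∈ (pcl R Rp a).erase q.1, ⟪γ, rootReflection δ y⟫) *
          ∏ γ ∈ (pcl R Rp b).erase q.2, ⟪γ, rootReflection δ y⟫)
      = ((if rrel R a δ then (-1:ℝ) else 1) * (if rrel R b δ then (-1:ℝ) else 1)) *
        ∑ q ∈ (pcl R Rp a) ×ˢ (pcl R Rp b),
          ⟪q.1, q.2⟫ * ((∏ γ ∈ (pcl R Rp a).erase q.1, ⟪γ, y⟫) *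
            ∏ γ ∈ (pcl R Rp b).erase q.2, ⟪γ, y⟫) := by
  have hδR : δ ∈ R := hRp.1 hδRp
  have h2 : ⟪δ, δ⟫ = (2:ℝ) := hnorm δ hδR
  have hmemRpa : ∀ γ ∈ pcl R Rp a, γ ∈ Rp := fun γ hγ => (mem_pcl.1 hγ).1
  have hmemRpb : ∀ γ ∈ pcl R Rp b, γ ∈ Rp := fun γ hγ => (mem_pcl.1 hγ).1
  rw [Finset.mul_sum]
  have herase : ∀ (P : Finset (EuclideanSpace ℝ (Fin n))) (hP : ∀ γ ∈ P, γ ∈ Rp)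
      (q1 : EuclideanSpace ℝ (Fin n)), q1 ∈ P →
      (∀ γ ∈ P, rpos Rp δ γ ∈ P) →
      ∏ γ ∈ P.erase q1, ⟪γ, rootReflection δ y⟫ =
        sg Rp δ q1 * (∏ γ ∈ P, sg Rp δ γ) * ∏ γ ∈ P.erase (rpos Rp δ q1), ⟪γ, y⟫ := by
    intro P hP q1 hq1 hcl
    have hprod := prod_rpos_map hR hnorm hRp hδRp (P.erase q1) (P.erase (rpos Rp δ q1))
      (fun γ hγ => hP _ (Finset.mem_of_mem_erase hγ))
      (fun γ hγ => hP _ (Finset.mem_of_mem_erase hγ)) ?_ ?_ y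
    · rw [hprod, prod_sg_sub1 hR hnorm hRp hδRp hq1 rfl]
    · intro γ hγ
      obtain ⟨hne1, hγP⟩ := Finset.mem_erase.1 hγ
      refine Finset.mem_erase.2 ⟨?_, hcl _ hγP⟩
      intro hcon
      exact hne1 (rpos_inj hR hnorm hRp hδRp (hP _ hγP) (hP _ hq1) hcon)
    · intro γ hγ
      obtain ⟨hne1, hγP⟩ := Finset.mem_erase.1 hγ
      refine Finset.mem_erase.2 ⟨?_, hcl _ hγP⟩
      intro hcon
      apply hne1
      have := congrArg (rpos Rp δ) hcon
      rwa [rpos_invol hR hnorm hRp hδRp (hP _ hγP)] at this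
  refine Finset.sum_nbij' (fun q => (rpos Rp δ q.1, rpos Rp δ q.2))
    (fun q => (rpos Rp δ q.1, rpos Rp δ q.2)) ?_ ?_ ?_ ?_ ?_
  · intro q hq
    obtain ⟨h1, h2'⟩ := Finset.mem_product.1 hq
    exact Finset.mem_product.2
      ⟨rpos_pcl hR hnorm hRp hδRp h1, rpos_pcl hR hnorm hRp hδRp h2'⟩
  · intro q hq
    obtain ⟨h1, h2'⟩ := Finset.mem_product.1 hq
    exact Finset.mem_product.2
      ⟨rpos_pcl hR hnorm hRp hδRp h1, rpos_pcl hR hnorm hRp hδRp h2'⟩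
  · intro q hq
    obtain ⟨h1, h2'⟩ := Finset.mem_product.1 hq
    ext <;> simp [rpos_invol hR hnorm hRp hδRp (hmemRpa _ h1),
      rpos_invol hR hnorm hRp hδRp (hmemRpb _ h2')]
  · intro q hq
    obtain ⟨h1, h2'⟩ := Finset.mem_product.1 hq
    ext <;> simp [rpos_invol hR hnorm hRp hδRp (hmemRpa _ h1),
      rpos_invol hR hnorm hRp hδRp (hmemRpb _ h2')]
  · intro q hq
    obtain ⟨h1, h2'⟩ := Finset.mem_product.1 hq
    rw [herase (pcl R Rp a) hmemRpa q.1 h1 (fun γ hγ => rpos_pcl hR hnorm hRp hδRp hγ),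
      herase (pcl R Rp b) hmemRpb q.2 h2' (fun γ hγ => rpos_pcl hR hnorm hRp hδRp hγ),
      prod_sg_pcl hR hnorm hRp hδRp ha, prod_sg_pcl hR hnorm hRp hδRp hb,
      inner_rpos_pair (Rp := Rp) δ q.1 q.2 h2]
    have hs1 := sg_mul_self (Rp := Rp) δ q.1
    have hs2 := sg_mul_self (Rp := Rp) δ q.2
    set J := ⟪rpos Rp δ q.1, rpos Rp δ q.2⟫
    set A := ∏ γ ∈ (pcl R Rp a).erase (rpos Rp δ q.1), ⟪γ, y⟫
    set B := ∏ γ ∈ (pcl R Rp b).erase (rpos Rp δ q.2), ⟪γ, y⟫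
    set e1 := if rrel R a δ then (-1:ℝ) else 1
    set e2 := if rrel R b δ then (-1:ℝ) else 1
    calc sg Rp δ q.1 * sg Rp δ q.2 * J * (sg Rp δ q.1 * e1 * A * (sg Rp δ q.2 * e2 * B))
        = (sg Rp δ q.1 * sg Rp δ q.1) * ((sg Rp δ q.2 * sg Rp δ q.2) *
            (e1 * e2 * (J * (A * B)))) := by ring
      _ = e1 * e2 * (J * (A * B)) := by rw [hs1, hs2]; ring

end Refl

include hR hnorm hRp in
lemma nonparallel {γ γ' : EuclideanSpace ℝ (Fin n)} (hγ : γ ∈ Rp) (hγ' : γ' ∈ Rp)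
    (hne : γ ≠ γ') (r : ℝ) : γ' ≠ r • γ := by
  intro hcon
  have hγR : γ ∈ R := hRp.1 hγ
  rcases hR.2.2.1 γ hγR r (by rw [← hcon]; exact hRp.1 hγ') with hc | hc
  · exact hne (by rw [hcon, hc])
  · rw [← hcon] at hc
    rcases hRp.2 γ hγR with ⟨_, h1⟩ | ⟨_, h1⟩
    · exact h1 (by rw [← hc]; exact hγ')
    · exact h1 hγ

include hR hnorm hRp in
lemma G1_zero {a : EuclideanSpace ℝ (Fin n)} (ha : a ∈ Rp)
    (y : EuclideanSpace ℝ (Fin n)) :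
    ∑ q ∈ ((pcl R Rp a) ×ˢ (pcl R Rp a)).filter (fun q => q.1 ≠ q.2),
        ⟪q.1, q.2⟫ * ∏ γ ∈ ((pcl R Rp a).erase q.1).erase q.2, ⟪γ, y⟫ = 0 := by
  classical
  set P := pcl R Rp a with hPdef
  have hmemRp : ∀ γ ∈ P, γ ∈ Rp := fun γ hγ => (mem_pcl.1 hγ).1
  by_cases hPe : P.card = 0
  · rw [Finset.card_eq_zero] at hPe
    rw [hPe]
    simp
  refine poly_zero (((P ×ˢ P).filter (fun q => q.1 ≠ q.2))) (fun q => ⟪q.1, q.2⟫)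
    (fun q => (P.erase q.1).erase q.2) P (P.card - 2) ?_ ?_ ?_ ?_ ?_ y
  · intro q hq
    obtain ⟨hqm, hqne⟩ := Finset.mem_filter.1 hq
    obtain ⟨h1, h2'⟩ := Finset.mem_product.1 hqm
    have hq2e : q.2 ∈ P.erase q.1 := Finset.mem_erase.2 ⟨fun h => hqne h.symm, h2'⟩
    rw [Finset.card_erase_of_mem hq2e, Finset.card_erase_of_mem h1]
    omega
  · intro γ hγ
    exact hR.1 γ (hRp.1 (hmemRp γ hγ))
  · intro γ hγ γ' hγ' hne r
    exact nonparallel hR hnorm hRp (hmemRp _ hγ) (hmemRp _ hγ') hne r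
  · omega
  · intro z hz
    obtain ⟨δ, hδP, hδz⟩ := hz
    have hδRp : δ ∈ Rp := hmemRp _ hδP
    have hrel : rrel R a δ := (mem_pcl.1 hδP).2
    have hfix : rootReflection δ z = z := rr_fixed hδz
    have := G1_reflect hR hnorm hRp hδRp ha z
    rw [hfix, if_pos hrel] at this
    linarith

include hR hnorm hRp in
lemma G2_zero {a b : EuclideanSpace ℝ (Fin n)} (ha : a ∈ Rp) (hb : b ∈ Rp)
    (hab : ¬ rrel R a b) (y : EuclideanSpace ℝ (Fin n)) :
    ∑ q ∈ (pcl R Rp a) ×ˢ (pcl R Rp b),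
        ⟪q.1, q.2⟫ * ((∏ γ ∈ (pcl R Rp a).erase q.1, ⟪γ, y⟫) *
          ∏ γ ∈ (pcl R Rp b).erase q.2, ⟪γ, y⟫) = 0 := by
  classical
  set Pa := pcl R Rp a with hPa
  set Pb := pcl R Rp b with hPb
  have hmemRpa : ∀ γ ∈ Pa, γ ∈ Rp := fun γ hγ => (mem_pcl.1 hγ).1
  have hmemRpb : ∀ γ ∈ Pb, γ ∈ Rp := fun γ hγ => (mem_pcl.1 hγ).1
  have hdisj : Disjoint Pa Pb :=
    Finset.disjoint_left.2 (fun {c} hc => pcl_disjoint hR hnorm hab hb c hc)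
  by_cases hae : Pa.card = 0
  · rw [Finset.card_eq_zero] at hae
    rw [hae]
    simp
  by_cases hbe : Pb.card = 0
  · rw [Finset.card_eq_zero] at hbe
    rw [hbe]
    simp
  have hconv : ∀ z : EuclideanSpace ℝ (Fin n), ∀ q ∈ Pa ×ˢ Pb,
      ⟪q.1, q.2⟫ * ((∏ γ ∈ Pa.erase q.1, ⟪γ, z⟫) * ∏ γ ∈ Pb.erase q.2, ⟪γ, z⟫) =
      ⟪q.1, q.2⟫ * ∏ γ ∈ (Pa.erase q.1) ∪ (Pb.erase q.2), ⟪γ, z⟫ := by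
    intro z q hq
    rw [Finset.prod_union (hdisj.mono (Finset.erase_subset _ _) (Finset.erase_subset _ _))]
  rw [Finset.sum_congr rfl (hconv y)]
  refine poly_zero (Pa ×ˢ Pb) (fun q => ⟪q.1, q.2⟫)
    (fun q => (Pa.erase q.1) ∪ (Pb.erase q.2)) (Pa ∪ Pb) (Pa.card + Pb.card - 2)
    ?_ ?_ ?_ ?_ ?_ y
  · intro q hq
    obtain ⟨h1, h2'⟩ := Finset.mem_product.1 hq
    rw [Finset.card_union_of_disjoint
      (hdisj.mono (Finset.erase_subset _ _) (Finset.erase_subset _ _)),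
      Finset.card_erase_of_mem h1, Finset.card_erase_of_mem h2']
    omega
  · intro γ hγ
    rcases Finset.mem_union.1 hγ with h | h
    · exact hR.1 γ (hRp.1 (hmemRpa γ h))
    · exact hR.1 γ (hRp.1 (hmemRpb γ h))
  · intro γ hγ γ' hγ' hne r
    have hγRp : γ ∈ Rp := by
      rcases Finset.mem_union.1 hγ with h | h
      exacts [hmemRpa γ h, hmemRpb γ h]
    have hγRp' : γ' ∈ Rp := by
      rcases Finset.mem_union.1 hγ' with h | h
      exacts [hmemRpa γ' h, hmemRpb γ' h]
    exact nonparallel hR hnorm hRp hγRp hγRp' hne r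
  · rw [Finset.card_union_of_disjoint hdisj]
    omega
  · intro z hz
    obtain ⟨δ, hδU, hδz⟩ := hz
    have hδRp : δ ∈ Rp := by
      rcases Finset.mem_union.1 hδU with h | h
      exacts [hmemRpa δ h, hmemRpb δ h]
    have hfix : rootReflection δ z = z := rr_fixed hδz
    have hkey := G2_reflect hR hnorm hRp hδRp ha hb z
    rw [hfix] at hkey
    rw [← Finset.sum_congr rfl (hconv z)]
    have hsign : ((if rrel R a δ then (-1:ℝ) else 1) * (if rrel R b δ then (-1:ℝ) else 1)) = -1 := by
      rcases Finset.mem_union.1 hδU with h | h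
      · have h1 : rrel R a δ := (mem_pcl.1 h).2
        have h2 : ¬ rrel R b δ := by
          intro hc
          exact hab (rrel_trans ((mem_pcl.1 h).2) (rrel_symm hR hnorm hc)) 
        rw [if_pos h1, if_neg h2]
        ring
      · have h1 : rrel R b δ := (mem_pcl.1 h).2
        have h2 : ¬ rrel R a δ := by
          intro hc
          exact hab (rrel_trans hc (rrel_symm hR hnorm h1))
        rw [if_neg h2, if_pos h1]
        ring
    rw [hsign] at hkey
    linarith


include hR hnorm hRp in
lemma I1_zero {a : EuclideanSpace ℝ (Fin n)} (ha : a ∈ Rp)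
    {x : EuclideanSpace ℝ (Fin n)} (hx : ∀ γ ∈ Rp, 0 < ⟪γ, x⟫) :
    ∑ q ∈ ((pcl R Rp a) ×ˢ (pcl R Rp a)).filter (fun q => q.1 ≠ q.2),
      ⟪q.1, q.2⟫ / (⟪q.1, x⟫ * ⟪q.2, x⟫) = 0 := by
  classical
  set P := pcl R Rp a with hPdef
  have hmemRp : ∀ γ ∈ P, γ ∈ Rp := fun γ hγ => (mem_pcl.1 hγ).1
  have hpos : ∀ γ ∈ P, 0 < ⟪γ, x⟫ := fun γ hγ => hx γ (hmemRp γ hγ)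
  have hProdP : 0 < ∏ γ ∈ P, ⟪γ, x⟫ := Finset.prod_pos hpos
  have hterm : ∀ q ∈ (P ×ˢ P).filter (fun q => q.1 ≠ q.2),
      ⟪q.1, q.2⟫ / (⟪q.1, x⟫ * ⟪q.2, x⟫) =
      (⟪q.1, q.2⟫ * ∏ γ ∈ (P.erase q.1).erase q.2, ⟪γ, x⟫) / ∏ γ ∈ P, ⟪γ, x⟫ := by
    intro q hq
    obtain ⟨hqm, hqne⟩ := Finset.mem_filter.1 hq
    obtain ⟨h1, h2'⟩ := Finset.mem_product.1 hqm
    have hq2e : q.2 ∈ P.erase q.1 := Finset.mem_erase.2 ⟨fun h => hqne h.symm, h2'⟩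
    have hsplit : ∏ γ ∈ P, ⟪γ, x⟫ =
        ⟪q.1, x⟫ * (⟪q.2, x⟫ * ∏ γ ∈ (P.erase q.1).erase q.2, ⟪γ, x⟫) := by
      rw [← Finset.mul_prod_erase _ _ h1, ← Finset.mul_prod_erase _ _ hq2e]
    have hp1 : ⟪q.1, x⟫ ≠ 0 := ne_of_gt (hpos _ h1)
    have hp2 : ⟪q.2, x⟫ ≠ 0 := ne_of_gt (hpos _ h2')
    have hdd : (∏ γ ∈ (P.erase q.1).erase q.2, ⟪γ, x⟫) ≠ 0 :=
      ne_of_gt (Finset.prod_pos (fun γ hγ =>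
        hpos γ (Finset.mem_of_mem_erase (Finset.mem_of_mem_erase hγ))))
    rw [hsplit, div_eq_div_iff (by positivity) (by positivity)]
    ring
  rw [Finset.sum_congr rfl hterm, ← Finset.sum_div,
    G1_zero hR hnorm hRp ha x, zero_div]

include hR hnorm hRp in
lemma I2_zero {a b : EuclideanSpace ℝ (Fin n)} (ha : a ∈ Rp) (hb : b ∈ Rp)
    (hab : ¬ rrel R a b)
    {x : EuclideanSpace ℝ (Fin n)} (hx : ∀ γ ∈ Rp, 0 < ⟪γ, x⟫) :
    ∑ q ∈ (pcl R Rp a) ×ˢ (pcl R Rp b),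
      ⟪q.1, q.2⟫ / (⟪q.1, x⟫ * ⟪q.2, x⟫) = 0 := by
  classical
  set Pa := pcl R Rp a with hPa
  set Pb := pcl R Rp b with hPb
  have hmemRpa : ∀ γ ∈ Pa, γ ∈ Rp := fun γ hγ => (mem_pcl.1 hγ).1
  have hmemRpb : ∀ γ ∈ Pb, γ ∈ Rp := fun γ hγ => (mem_pcl.1 hγ).1
  have hposa : ∀ γ ∈ Pa, 0 < ⟪γ, x⟫ := fun γ hγ => hx γ (hmemRpa γ hγ)
  have hposb : ∀ γ ∈ Pb, 0 < ⟪γ, x⟫ := fun γ hγ => hx γ (hmemRpb γ hγ)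
  have hterm : ∀ q ∈ Pa ×ˢ Pb,
      ⟪q.1, q.2⟫ / (⟪q.1, x⟫ * ⟪q.2, x⟫) =
      (⟪q.1, q.2⟫ * ((∏ γ ∈ Pa.erase q.1, ⟪γ, x⟫) * ∏ γ ∈ Pb.erase q.2, ⟪γ, x⟫)) /
        ((∏ γ ∈ Pa, ⟪γ, x⟫) * ∏ γ ∈ Pb, ⟪γ, x⟫) := by
    intro q hq
    obtain ⟨h1, h2'⟩ := Finset.mem_product.1 hq
    have hsplita : ∏ γ ∈ Pa, ⟪γ, x⟫ = ⟪q.1, x⟫ * ∏ γ ∈ Pa.erase q.1, ⟪γ, x⟫ :=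
      (Finset.mul_prod_erase _ _ h1).symm
    have hsplitb : ∏ γ ∈ Pb, ⟪γ, x⟫ = ⟪q.2, x⟫ * ∏ γ ∈ Pb.erase q.2, ⟪γ, x⟫ :=
      (Finset.mul_prod_erase _ _ h2').symm
    have hea : (0:ℝ) < ∏ γ ∈ Pa.erase q.1, ⟪γ, x⟫ :=
      Finset.prod_pos (fun γ hγ => hposa γ (Finset.mem_of_mem_erase hγ))
    have heb : (0:ℝ) < ∏ γ ∈ Pb.erase q.2, ⟪γ, x⟫ :=
      Finset.prod_pos (fun γ hγ => hposb γ (Finset.mem_of_mem_erase hγ))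
    have hp1 := hposa _ h1
    have hp2 := hposb _ h2'
    rw [hsplita, hsplitb, div_eq_div_iff (by positivity) (by positivity)]
    ring
  rw [Finset.sum_congr rfl hterm, ← Finset.sum_div,
    G2_zero hR hnorm hRp ha hb hab x, zero_div]

include hR hnorm hRp in
/-- The master cancellation: for `W`-invariant weights `g`, `h` the cross sum of
`g α * h β * ⟪α,β⟫ / (⟪α,x⟫⟪β,x⟫)` over distinct positive roots vanishes. -/
lemma master (g h : EuclideanSpace ℝ (Fin n) → ℝ)
    (hg : ∀ a ∈ R, ∀ δ ∈ R, g (rootReflection δ a) = g a)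
    (hh : ∀ a ∈ R, ∀ δ ∈ R, h (rootReflection δ a) = h a)
    {x : EuclideanSpace ℝ (Fin n)} (hx : ∀ γ ∈ Rp, 0 < ⟪γ, x⟫) :
    ∑ α ∈ Rp, ∑ β ∈ Rp.erase α, g α * h β * ⟪α, β⟫ / (⟪α, x⟫ * ⟪β, x⟫) = 0 := by
  classical
  set F : EuclideanSpace ℝ (Fin n) × EuclideanSpace ℝ (Fin n) → ℝ :=
    fun q => g q.1 * h q.2 * ⟪q.1, q.2⟫ / (⟪q.1, x⟫ * ⟪q.2, x⟫) with hF
  set Pr : Finset (EuclideanSpace ℝ (Fin n) × EuclideanSpace ℝ (Fin n)) :=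
    (Rp ×ˢ Rp).filter (fun q => q.1 ≠ q.2) with hPr
  have hM1 : ∑ α ∈ Rp, ∑ β ∈ Rp.erase α, g α * h β * ⟪α, β⟫ / (⟪α, x⟫ * ⟪β, x⟫)
      = ∑ q ∈ Pr, F q := by
    rw [hPr, Finset.sum_filter, Finset.sum_product]
    refine Finset.sum_congr rfl (fun α hα => ?_)
    rw [← Finset.sum_filter, Finset.filter_ne]
  rw [hM1]
  set fib : EuclideanSpace ℝ (Fin n) × EuclideanSpace ℝ (Fin n) →
      Finset (EuclideanSpace ℝ (Fin n) × EuclideanSpace ℝ (Fin n)) :=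
    fun p => Pr.filter (fun q => rrel R p.1 q.1 ∧ rrel R p.2 q.2) with hfib
  have hmemPr : ∀ p ∈ Pr, p.1 ∈ Rp ∧ p.2 ∈ Rp ∧ p.1 ≠ p.2 := by
    intro p hp
    obtain ⟨hm, hne⟩ := Finset.mem_filter.1 hp
    obtain ⟨h1, h2⟩ := Finset.mem_product.1 hm
    exact ⟨h1, h2, hne⟩
  have hself : ∀ p ∈ Pr, p ∈ fib p := by
    intro p hp
    exact Finset.mem_filter.2 ⟨hp, Relation.ReflTransGen.refl, Relation.ReflTransGen.refl⟩
  have hfib_eq : ∀ p ∈ Pr, ∀ q ∈ fib p, fib q = fib p := by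
    intro p hp q hq
    obtain ⟨hqPr, hq1, hq2⟩ := Finset.mem_filter.1 hq
    refine Finset.filter_congr (fun r hr => ?_)
    constructor
    · rintro ⟨hr1, hr2⟩
      exact ⟨rrel_trans hq1 hr1, rrel_trans hq2 hr2⟩
    · rintro ⟨hr1, hr2⟩
      exact ⟨rrel_trans (rrel_symm hR hnorm hq1) hr1,
        rrel_trans (rrel_symm hR hnorm hq2) hr2⟩
  have hzero : ∀ p ∈ Pr, ∑ q ∈ fib p, F q = 0 := by
    intro p hp
    obtain ⟨hp1, hp2, hpne⟩ := hmemPr p hp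
    have hp1R : p.1 ∈ R := hRp.1 hp1
    have hp2R : p.2 ∈ R := hRp.1 hp2
    have hgh : ∀ q ∈ fib p, F q = g p.1 * h p.2 * (⟪q.1, q.2⟫ / (⟪q.1, x⟫ * ⟪q.2, x⟫)) := by
      intro q hq
      obtain ⟨hqPr, hq1, hq2⟩ := Finset.mem_filter.1 hq
      rw [hF]
      simp only
      rw [rrel_const hR g hg hq1 hp1R, rrel_const hR h hh hq2 hp2R]
      ring
    rw [Finset.sum_congr rfl hgh, ← Finset.mul_sum]
    by_cases hrel : rrel R p.1 p.2
    · have hclass : fib p = ((pcl R Rp p.1) ×ˢ (pcl R Rp p.1)).filter (fun q => q.1 ≠ q.2) := by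
        ext q
        simp only [hfib, hPr, Finset.mem_filter, Finset.mem_product, mem_pcl]
        constructor
        · rintro ⟨⟨⟨hq1, hq2⟩, hne⟩, hr1, hr2⟩
          exact ⟨⟨⟨hq1, hr1⟩, ⟨hq2, rrel_trans hrel hr2⟩⟩, hne⟩
        · rintro ⟨⟨⟨hq1, hr1⟩, hq2, hr2⟩, hne⟩
          exact ⟨⟨⟨hq1, hq2⟩, hne⟩, hr1, rrel_trans (rrel_symm hR hnorm hrel) hr2⟩
      rw [hclass, I1_zero hR hnorm hRp hp1 hx, mul_zero]
    · have hclass : fib p = (pcl R Rp p.1) ×ˢ (pcl R Rp p.2) := by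
        ext q
        simp only [hfib, hPr, Finset.mem_filter, Finset.mem_product, mem_pcl]
        constructor
        · rintro ⟨⟨⟨hq1, hq2⟩, hne⟩, hr1, hr2⟩
          exact ⟨⟨hq1, hr1⟩, hq2, hr2⟩
        · rintro ⟨⟨hq1, hr1⟩, hq2, hr2⟩
          refine ⟨⟨⟨hq1, hq2⟩, ?_⟩, hr1, hr2⟩
          intro hcon
          exact hrel (rrel_trans hr1 (rrel_symm hR hnorm (hcon ▸ hr2)))
      rw [hclass, I2_zero hR hnorm hRp hp1 hp2 hrel hx, mul_zero]
  -- averaging over fibers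
  have hkey : ∀ q ∈ Pr,
      (∑ p ∈ Pr, if (rrel R p.1 q.1 ∧ rrel R p.2 q.2) then (((fib p).card : ℝ))⁻¹ else 0) = 1 := by
    intro q hq
    rw [← Finset.sum_filter]
    have hflip : Pr.filter (fun p => rrel R p.1 q.1 ∧ rrel R p.2 q.2) = fib q := by
      refine Finset.filter_congr (fun r hr => ?_)
      constructor
      · rintro ⟨h1', h2'⟩
        exact ⟨rrel_symm hR hnorm h1', rrel_symm hR hnorm h2'⟩
      · rintro ⟨h1', h2'⟩
        exact ⟨rrel_symm hR hnorm h1', rrel_symm hR hnorm h2'⟩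
    rw [hflip]
    have hconst : ∀ p ∈ fib q, (((fib p).card : ℝ))⁻¹ = (((fib q).card : ℝ))⁻¹ := by
      intro p hp
      rw [hfib_eq q hq p hp]
    rw [Finset.sum_congr rfl hconst, Finset.sum_const, nsmul_eq_mul]
    have hne : ((fib q).card : ℝ) ≠ 0 := by
      have : q ∈ fib q := hself q hq
      have hpos : 0 < (fib q).card := Finset.card_pos.2 ⟨q, this⟩
      exact_mod_cast Nat.pos_iff_ne_zero.1 hpos
    field_simp
  calc ∑ q ∈ Pr, F q
      = ∑ q ∈ Pr, (∑ p ∈ Pr, if (rrel R p.1 q.1 ∧ rrel R p.2 q.2) then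
          (((fib p).card : ℝ))⁻¹ else 0) * F q := by
        refine Finset.sum_congr rfl (fun q hq => ?_)
        rw [hkey q hq, one_mul]
    _ = ∑ q ∈ Pr, ∑ p ∈ Pr, (if (rrel R p.1 q.1 ∧ rrel R p.2 q.2) then
          (((fib p).card : ℝ))⁻¹ * F q else 0) := by
        refine Finset.sum_congr rfl (fun q hq => ?_)
        rw [Finset.sum_mul]
        refine Finset.sum_congr rfl (fun p hp => ?_)
        rw [ite_mul, zero_mul]
    _ = ∑ p ∈ Pr, ∑ q ∈ Pr, (if (rrel R p.1 q.1 ∧ rrel R p.2 q.2) then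
          (((fib p).card : ℝ))⁻¹ * F q else 0) := Finset.sum_comm
    _ = ∑ p ∈ Pr, (((fib p).card : ℝ))⁻¹ * ∑ q ∈ fib p, F q := by
        refine Finset.sum_congr rfl (fun p hp => ?_)
        rw [← Finset.sum_filter, ← Finset.mul_sum]
    _ = 0 := by
        refine Finset.sum_eq_zero (fun p hp => ?_)
        rw [hzero p hp, mul_zero]

end RS
end DBH

namespace DBHA
variable {n : ℕ}

noncomputable def Sf (A : Finset (EuclideanSpace ℝ (Fin n))) (c : EuclideanSpace ℝ (Fin n) → ℝ)
    (y : EuclideanSpace ℝ (Fin n)) : ℝ := ∑ α ∈ A, c α * Real.log ⟪α, y⟫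

noncomputable def Tf (B : Finset (EuclideanSpace ℝ (Fin n)))
    (y : EuclideanSpace ℝ (Fin n)) : ℝ := ∑ β ∈ B, Real.log ⟪β, y⟫

noncomputable def Sd (A : Finset (EuclideanSpace ℝ (Fin n))) (c : EuclideanSpace ℝ (Fin n) → ℝ)
    (y : EuclideanSpace ℝ (Fin n)) : EuclideanSpace ℝ (Fin n) →L[ℝ] ℝ :=
  ∑ α ∈ A, c α • ((⟪α, y⟫)⁻¹ • innerSL ℝ α)

noncomputable def Td (B : Finset (EuclideanSpace ℝ (Fin n)))
    (y : EuclideanSpace ℝ (Fin n)) : EuclideanSpace ℝ (Fin n) →L[ℝ] ℝ :=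
  ∑ β ∈ B, (⟪β, y⟫)⁻¹ • innerSL ℝ β

variable (A B : Finset (EuclideanSpace ℝ (Fin n))) (c : EuclideanSpace ℝ (Fin n) → ℝ)

lemma hasFDerivAt_Sf {y : EuclideanSpace ℝ (Fin n)} (hy : ∀ γ ∈ A, 0 < ⟪γ, y⟫) :
    HasFDerivAt (Sf A c) (Sd A c y) y := by
  refine HasFDerivAt.fun_sum (fun α hα => ?_)
  have hlog : HasFDerivAt (fun z => Real.log ⟪α, z⟫) ((⟪α, y⟫)⁻¹ • innerSL ℝ α) y := by
    have h1 := (Real.hasDerivAt_log (ne_of_gt (hy α hα))).comp_hasFDerivAt y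
      ((innerSL ℝ α).hasFDerivAt)
    exact h1
  exact hlog.const_mul (c α)

lemma hasFDerivAt_Tf {y : EuclideanSpace ℝ (Fin n)} (hy : ∀ γ ∈ B, 0 < ⟪γ, y⟫) :
    HasFDerivAt (Tf B) (Td B y) y := by
  refine HasFDerivAt.fun_sum (fun β hβ => ?_)
  exact (Real.hasDerivAt_log (ne_of_gt (hy β hβ))).comp_hasFDerivAt y
    ((innerSL ℝ β).hasFDerivAt)

lemma hasFDerivAt_P {y : EuclideanSpace ℝ (Fin n)} (hy : ∀ γ ∈ A, 0 < ⟪γ, y⟫) :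
    HasFDerivAt (fun z => Real.exp (Sf A c z)) (Real.exp (Sf A c y) • Sd A c y) y :=
  (Real.hasDerivAt_exp (Sf A c y)).comp_hasFDerivAt y (hasFDerivAt_Sf A c hy)

noncomputable def gf (y : EuclideanSpace ℝ (Fin n)) : ℝ := Real.exp (Sf A c y) * Tf B y

noncomputable def Dg (y : EuclideanSpace ℝ (Fin n)) : EuclideanSpace ℝ (Fin n) →L[ℝ] ℝ :=
  Real.exp (Sf A c y) • Td B y + Tf B y • (Real.exp (Sf A c y) • Sd A c y)

lemma hasFDerivAt_g {y : EuclideanSpace ℝ (Fin n)} (hyA : ∀ γ ∈ A, 0 < ⟪γ, y⟫)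
    (hyB : ∀ γ ∈ B, 0 < ⟪γ, y⟫) :
    HasFDerivAt (gf A B c) (Dg A B c y) y :=
  (hasFDerivAt_P A c hyA).mul (hasFDerivAt_Tf B hyB)

lemma Dg_apply (y v : EuclideanSpace ℝ (Fin n)) :
    Dg A B c y v = Real.exp (Sf A c y) * (∑ β ∈ B, (⟪β, y⟫)⁻¹ * ⟪β, v⟫) +
      Tf B y * (Real.exp (Sf A c y) * ∑ α ∈ A, c α * ((⟪α, y⟫)⁻¹ * ⟪α, v⟫)) := by
  simp only [Dg, Sd, Td, ContinuousLinearMap.add_apply, ContinuousLinearMap.smul_apply,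
    ContinuousLinearMap.sum_apply, innerSL_apply_apply, smul_eq_mul, Finset.mul_sum]


noncomputable def ff (A B : Finset (EuclideanSpace ℝ (Fin n))) (c : EuclideanSpace ℝ (Fin n) → ℝ)
    (y : EuclideanSpace ℝ (Fin n)) : ℝ :=
  (∏ α ∈ A, ⟪α, y⟫ ^ (c α)) * Real.log (∏ β ∈ B, ⟪β, y⟫)

lemma ff_eq_gf {y : EuclideanSpace ℝ (Fin n)} (hyA : ∀ γ ∈ A, 0 < ⟪γ, y⟫)
    (hyB : ∀ γ ∈ B, 0 < ⟪γ, y⟫) : ff A B c y = gf A B c y := by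
  rw [ff, gf, Sf, Tf]
  congr 1
  · have hp : ∀ α ∈ A, ⟪α, y⟫ ^ c α = Real.exp (c α * Real.log ⟪α, y⟫) :=
      fun α hα => by rw [Real.rpow_def_of_pos (hyA α hα), mul_comm]
    rw [Finset.prod_congr rfl hp, ← Real.exp_sum]
  · rw [Real.log_prod (fun β hβ => ne_of_gt (hyB β hβ))]

lemma isOpen_posset (G : Finset (EuclideanSpace ℝ (Fin n))) :
    IsOpen {y : EuclideanSpace ℝ (Fin n) | ∀ γ ∈ G, 0 < ⟪γ, y⟫} := by
  have h : {y : EuclideanSpace ℝ (Fin n) | ∀ γ ∈ G, 0 < ⟪γ, y⟫} =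
      ⋂ γ ∈ G, {y | 0 < ⟪γ, y⟫} := by
    ext y; simp
  rw [h]
  refine isOpen_biInter_finset (fun γ _ => ?_)
  have hc : Continuous (fun y : EuclideanSpace ℝ (Fin n) => ⟪γ, y⟫) :=
    (innerSL ℝ γ).continuous
  exact isOpen_Ioi.preimage hc

lemma lapkey (γ α : EuclideanSpace ℝ (Fin n)) :
    ∑ i : Fin n, ⟪γ, EuclideanSpace.single i 1⟫ * ⟪α, EuclideanSpace.single i 1⟫ = ⟪γ, α⟫ := by
  have h : ∀ (v : EuclideanSpace ℝ (Fin n)) (i : Fin n),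
      ⟪v, EuclideanSpace.single i 1⟫ = v i := by
    intro v i
    simp [EuclideanSpace.inner_single_right]
  have h2 : ⟪γ, α⟫ = ∑ i : Fin n, γ i * α i := by
    rw [PiLp.inner_apply]
    simp [RCLike.inner_apply, mul_comm]
  rw [h2]
  refine Finset.sum_congr rfl (fun i _ => ?_)
  rw [h, h]

lemma sum_apply_key (w : EuclideanSpace ℝ (Fin n) → ℝ) (S : Finset (EuclideanSpace ℝ (Fin n)))
    (α : EuclideanSpace ℝ (Fin n)) :
    ∑ i : Fin n, (∑ γ ∈ S, w γ * ⟪γ, EuclideanSpace.single i 1⟫) *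
        ⟪α, EuclideanSpace.single i 1⟫
      = ∑ γ ∈ S, w γ * ⟪γ, α⟫ := by
  have h1 : ∀ i : Fin n, (∑ γ ∈ S, w γ * ⟪γ, EuclideanSpace.single i 1⟫) *
      ⟪α, EuclideanSpace.single i 1⟫ =
      ∑ γ ∈ S, w γ * (⟪γ, EuclideanSpace.single i 1⟫ * ⟪α, EuclideanSpace.single i 1⟫) := by
    intro i
    rw [Finset.sum_mul]
    exact Finset.sum_congr rfl (fun γ _ => by ring)
  rw [Finset.sum_congr rfl (fun i _ => h1 i), Finset.sum_comm]
  refine Finset.sum_congr rfl (fun γ _ => ?_)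
  rw [← Finset.mul_sum, lapkey]


lemma grad_ff {x : EuclideanSpace ℝ (Fin n)} (hxA : ∀ γ ∈ A, 0 < ⟪γ, x⟫)
    (hxB : ∀ γ ∈ B, 0 < ⟪γ, x⟫) (v : EuclideanSpace ℝ (Fin n)) :
    ⟪gradient (ff A B c) x, v⟫ = Dg A B c x v := by
  have hopen := (isOpen_posset A).inter (isOpen_posset B)
  have hmem : ({y : EuclideanSpace ℝ (Fin n) | ∀ γ ∈ A, 0 < ⟪γ, y⟫} ∩
      {y | ∀ γ ∈ B, 0 < ⟪γ, y⟫}) ∈ nhds x := hopen.mem_nhds ⟨hxA, hxB⟩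
  have hev : ff A B c =ᶠ[nhds x] gf A B c :=
    Filter.eventuallyEq_of_mem hmem (fun y hy => ff_eq_gf A B c hy.1 hy.2)
  have hf : HasFDerivAt (ff A B c) (Dg A B c x) x :=
    (hasFDerivAt_g A B c hxA hxB).congr_of_eventuallyEq hev
  have hg : HasGradientAt (ff A B c)
      ((InnerProductSpace.toDual ℝ _).symm (Dg A B c x)) x :=
    hasFDerivAt_iff_hasGradientAt.mp hf
  rw [hg.gradient]
  exact InnerProductSpace.toDual_symm_apply

noncomputable def Dg2 (A B : Finset (EuclideanSpace ℝ (Fin n)))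
    (c : EuclideanSpace ℝ (Fin n) → ℝ) (y : EuclideanSpace ℝ (Fin n)) :
    EuclideanSpace ℝ (Fin n) →L[ℝ] ℝ :=
  (∑ α ∈ A, (Tf B y * (Real.exp (Sf A c y) * (c α * (⟪α, y⟫)⁻¹))) • innerSL ℝ α) +
    ∑ β ∈ B, (Real.exp (Sf A c y) * (⟪β, y⟫)⁻¹) • innerSL ℝ β

lemma Dg_eq_Dg2 (y : EuclideanSpace ℝ (Fin n)) : Dg A B c y = Dg2 A B c y := by
  refine ContinuousLinearMap.ext (fun v => ?_)
  rw [Dg_apply]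
  simp only [Dg2, ContinuousLinearMap.add_apply, ContinuousLinearMap.sum_apply,
    ContinuousLinearMap.smul_apply, innerSL_apply_apply, smul_eq_mul]
  rw [Finset.mul_sum, add_comm]
  congr 1
  · rw [Finset.mul_sum, Finset.mul_sum]
    refine Finset.sum_congr rfl (fun α _ => by ring)
  · refine Finset.sum_congr rfl (fun β _ => by ring)



lemma sum_apply_key2 (w u : EuclideanSpace ℝ (Fin n) → ℝ) (S : Finset (EuclideanSpace ℝ (Fin n)))
    (α : EuclideanSpace ℝ (Fin n)) :
    ∑ i : Fin n, (∑ γ ∈ S, w γ * (u γ * ⟪γ, EuclideanSpace.single i 1⟫)) *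
        ⟪α, EuclideanSpace.single i 1⟫
      = ∑ γ ∈ S, w γ * (u γ * ⟪γ, α⟫) := by
  have h1 : ∀ i : Fin n, (∑ γ ∈ S, w γ * (u γ * ⟪γ, EuclideanSpace.single i 1⟫)) *
      ⟪α, EuclideanSpace.single i 1⟫ =
      ∑ γ ∈ S, (w γ * u γ) * (⟪γ, EuclideanSpace.single i 1⟫ * ⟪α, EuclideanSpace.single i 1⟫) := by
    intro i
    rw [Finset.sum_mul]
    exact Finset.sum_congr rfl (fun γ _ => by ring)
  rw [Finset.sum_congr rfl (fun i _ => h1 i), Finset.sum_comm]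
  refine Finset.sum_congr rfl (fun γ _ => ?_)
  rw [← Finset.mul_sum, lapkey]
  ring

lemma lap_ff {x : EuclideanSpace ℝ (Fin n)} (hxA : ∀ γ ∈ A, 0 < ⟪γ, x⟫)
    (hxB : ∀ γ ∈ B, 0 < ⟪γ, x⟫) :
    laplacian (ff A B c) x =
      ∑ α ∈ A, (Tf B x * Real.exp (Sf A c x) * c α * (-(⟪α, x⟫ ^ 2)⁻¹) * ⟪α, α⟫
          + Tf B x * c α * (⟪α, x⟫)⁻¹ * Real.exp (Sf A c x) *
              (∑ γ ∈ A, c γ * ((⟪γ, x⟫)⁻¹ * ⟪γ, α⟫))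
          + Real.exp (Sf A c x) * c α * (⟪α, x⟫)⁻¹ * (∑ γ ∈ B, (⟪γ, x⟫)⁻¹ * ⟪γ, α⟫))
      + ∑ β ∈ B, (Real.exp (Sf A c x) * (-(⟪β, x⟫ ^ 2)⁻¹) * ⟪β, β⟫
          + (⟪β, x⟫)⁻¹ * Real.exp (Sf A c x) *
              (∑ γ ∈ A, c γ * ((⟪γ, x⟫)⁻¹ * ⟪γ, β⟫))) := by
  have hopen := (isOpen_posset A).inter (isOpen_posset B)
  have hmem : ({y : EuclideanSpace ℝ (Fin n) | ∀ γ ∈ A, 0 < ⟪γ, y⟫} ∩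
      {y | ∀ γ ∈ B, 0 < ⟪γ, y⟫}) ∈ nhds x := hopen.mem_nhds ⟨hxA, hxB⟩
  -- the first derivative of ff agrees with Dg2 near x
  have hfd : fderiv ℝ (ff A B c) =ᶠ[nhds x] Dg2 A B c := by
    refine Filter.eventuallyEq_of_mem hmem (fun y hy => ?_)
    have hevy : ff A B c =ᶠ[nhds y] gf A B c :=
      Filter.eventuallyEq_of_mem (hopen.mem_nhds hy) (fun z hz => ff_eq_gf A B c hz.1 hz.2)
    have h1 : HasFDerivAt (ff A B c) (Dg A B c y) y :=
      (hasFDerivAt_g A B c hy.1 hy.2).congr_of_eventuallyEq hevy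
    exact h1.fderiv.trans (Dg_eq_Dg2 A B c y)
  have hinv : ∀ γ : EuclideanSpace ℝ (Fin n), 0 < ⟪γ, x⟫ →
      HasFDerivAt (fun y : EuclideanSpace ℝ (Fin n) => (⟪γ, y⟫)⁻¹)
        ((-(⟪γ, x⟫ ^ 2)⁻¹) • innerSL ℝ γ) x := fun γ hγ =>
    (hasDerivAt_inv (ne_of_gt hγ)).comp_hasFDerivAt x (innerSL ℝ γ).hasFDerivAt
  have hP := hasFDerivAt_P A c hxA
  have hT := hasFDerivAt_Tf B hxB
  have hM : HasFDerivAt (Dg2 A B c)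
      ((∑ α ∈ A, ((Tf B x * (Real.exp (Sf A c x) * (c α * (⟪α, x⟫)⁻¹))) •
            (0 : EuclideanSpace ℝ (Fin n) →L[ℝ] (EuclideanSpace ℝ (Fin n) →L[ℝ] ℝ))
          + (Tf B x • (Real.exp (Sf A c x) • (c α • ((-(⟪α, x⟫ ^ 2)⁻¹) • innerSL ℝ α))
              + (c α * (⟪α, x⟫)⁻¹) • (Real.exp (Sf A c x) • Sd A c x))
             + (Real.exp (Sf A c x) * (c α * (⟪α, x⟫)⁻¹)) • Td B x).smulRight (innerSL ℝ α)))
       + ∑ β ∈ B, ((Real.exp (Sf A c x) * (⟪β, x⟫)⁻¹) •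
            (0 : EuclideanSpace ℝ (Fin n) →L[ℝ] (EuclideanSpace ℝ (Fin n) →L[ℝ] ℝ))
          + (Real.exp (Sf A c x) • ((-(⟪β, x⟫ ^ 2)⁻¹) • innerSL ℝ β)
             + (⟪β, x⟫)⁻¹ • (Real.exp (Sf A c x) • Sd A c x)).smulRight (innerSL ℝ β))) x := by
    refine HasFDerivAt.add (HasFDerivAt.fun_sum (fun α hα => ?_)) (HasFDerivAt.fun_sum (fun β hβ => ?_))
    · exact (hT.mul (hP.mul ((hinv α (hxA α hα)).const_mul (c α)))).smul
        (hasFDerivAt_const (innerSL ℝ α) x)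
    · exact (hP.mul (hinv β (hxB β hβ))).smul (hasFDerivAt_const (innerSL ℝ β) x)
  have hsecond : ∀ i : Fin n,
      iteratedFDeriv ℝ 2 (ff A B c) x ![EuclideanSpace.single i 1, EuclideanSpace.single i 1]
        = fderiv ℝ (Dg2 A B c) x (EuclideanSpace.single i 1) (EuclideanSpace.single i 1) := by
    intro i
    rw [iteratedFDeriv_two_apply, hfd.fderiv_eq]
    simp only [Matrix.cons_val_zero, Matrix.cons_val_one, Matrix.head_cons]
  rw [laplacian, Finset.sum_congr rfl (fun i _ => hsecond i), hM.fderiv]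
  simp only [ContinuousLinearMap.add_apply, ContinuousLinearMap.sum_apply,
    ContinuousLinearMap.smul_apply, ContinuousLinearMap.zero_apply,
    ContinuousLinearMap.smulRight_apply, innerSL_apply_apply, smul_eq_mul, Sd, Td,
    mul_zero, zero_add, add_zero, smul_zero]
  rw [Finset.sum_add_distrib]
  congr 1
  · rw [Finset.sum_comm]
    refine Finset.sum_congr rfl (fun α hα => ?_)
    trans (∑ i : Fin n,
      ((Tf B x * Real.exp (Sf A c x) * c α * (-(⟪α, x⟫ ^ 2)⁻¹)) *
          (⟪α, EuclideanSpace.single i 1⟫ * ⟪α, EuclideanSpace.single i 1⟫)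
        + ((Tf B x * c α * (⟪α, x⟫)⁻¹ * Real.exp (Sf A c x)) *
            ((∑ γ ∈ A, c γ * ((⟪γ, x⟫)⁻¹ * ⟪γ, EuclideanSpace.single i 1⟫)) *
              ⟪α, EuclideanSpace.single i 1⟫)
          + (Real.exp (Sf A c x) * c α * (⟪α, x⟫)⁻¹) *
              ((∑ γ ∈ B, (⟪γ, x⟫)⁻¹ * ⟪γ, EuclideanSpace.single i 1⟫) *
                ⟪α, EuclideanSpace.single i 1⟫))))
    · exact Finset.sum_congr rfl (fun i _ => by ring)
    · rw [Finset.sum_add_distrib, Finset.sum_add_distrib, ← Finset.mul_sum, ← Finset.mul_sum,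
        ← Finset.mul_sum, lapkey]
      have k2 := sum_apply_key2 c (fun γ => (⟪γ, x⟫)⁻¹) A α
      have k1 := sum_apply_key (fun γ => (⟪γ, x⟫)⁻¹) B α
      rw [k2, k1]
      ring
  · rw [Finset.sum_comm]
    refine Finset.sum_congr rfl (fun β hβ => ?_)
    trans (∑ i : Fin n,
      ((Real.exp (Sf A c x) * (-(⟪β, x⟫ ^ 2)⁻¹)) *
          (⟪β, EuclideanSpace.single i 1⟫ * ⟪β, EuclideanSpace.single i 1⟫)
        + ((⟪β, x⟫)⁻¹ * Real.exp (Sf A c x)) *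
            ((∑ γ ∈ A, c γ * ((⟪γ, x⟫)⁻¹ * ⟪γ, EuclideanSpace.single i 1⟫)) *
              ⟪β, EuclideanSpace.single i 1⟫)))
    · exact Finset.sum_congr rfl (fun i _ => by ring)
    · rw [Finset.sum_add_distrib, ← Finset.mul_sum, ← Finset.mul_sum, lapkey]
      have k2 := sum_apply_key2 c (fun γ => (⟪γ, x⟫)⁻¹) A β
      rw [k2]

end DBHA

namespace DBHB
variable {n : ℕ}

lemma offdiag_swap (s : Finset (EuclideanSpace ℝ (Fin n)))
    (F : EuclideanSpace ℝ (Fin n) → EuclideanSpace ℝ (Fin n) → ℝ) :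
    ∑ α ∈ s, ∑ β ∈ s.erase α, F α β = ∑ α ∈ s, ∑ β ∈ s.erase α, F β α := by
  classical
  have h1 : ∀ (G : EuclideanSpace ℝ (Fin n) → EuclideanSpace ℝ (Fin n) → ℝ),
      ∑ α ∈ s, ∑ β ∈ s.erase α, G α β =
      ∑ q ∈ (s ×ˢ s).filter (fun q => q.1 ≠ q.2), G q.1 q.2 := by
    intro G
    rw [Finset.sum_filter, Finset.sum_product]
    refine Finset.sum_congr rfl (fun α hα => ?_)
    rw [← Finset.sum_filter, Finset.filter_ne]
  rw [h1, h1]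
  refine Finset.sum_nbij' (fun q => (q.2, q.1)) (fun q => (q.2, q.1)) ?_ ?_ ?_ ?_ ?_
  · intro q hq
    obtain ⟨hm, hne⟩ := Finset.mem_filter.1 hq
    obtain ⟨t1, t2⟩ := Finset.mem_product.1 hm
    exact Finset.mem_filter.2 ⟨Finset.mem_product.2 ⟨t2, t1⟩, fun h => hne h.symm⟩
  · intro q hq
    obtain ⟨hm, hne⟩ := Finset.mem_filter.1 hq
    obtain ⟨t1, t2⟩ := Finset.mem_product.1 hm
    exact Finset.mem_filter.2 ⟨Finset.mem_product.2 ⟨t2, t1⟩, fun h => hne h.symm⟩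
  · intro q _; rfl
  · intro q _; rfl
  · intro q _; rfl


lemma partB (Rp A B : Finset (EuclideanSpace ℝ (Fin n)))
    (k c b : EuclideanSpace ℝ (Fin n) → ℝ) (x : EuclideanSpace ℝ (Fin n)) (P T : ℝ)
    (hA : A = Rp.filter (fun α => k α ≠ 1/2))
    (hB : B = Rp.filter (fun α => k α = 1/2))
    (hc : ∀ γ, c γ = 1 - 2 * k γ)
    (hb : ∀ γ, b γ = if k γ = 1/2 then (1:ℝ) else 0)
    (hall : ∀ γ ∈ Rp, ⟪γ, γ⟫ = (2:ℝ))
    (hM1 : ∑ α ∈ Rp, ∑ β ∈ Rp.erase α, c α * (1:ℝ) * ⟪α, β⟫ / (⟪α, x⟫ * ⟪β, x⟫) = 0)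
    (hM2 : ∑ α ∈ Rp, ∑ β ∈ Rp.erase α, (1 - k α) * b β * ⟪α, β⟫ / (⟪α, x⟫ * ⟪β, x⟫) = 0) :
    (1/2) * ((∑ α ∈ A, (T * P * c α * (-(⟪α, x⟫ ^ 2)⁻¹) * ⟪α, α⟫
          + T * c α * (⟪α, x⟫)⁻¹ * P * (∑ γ ∈ A, c γ * ((⟪γ, x⟫)⁻¹ * ⟪γ, α⟫))
          + P * c α * (⟪α, x⟫)⁻¹ * (∑ γ ∈ B, (⟪γ, x⟫)⁻¹ * ⟪γ, α⟫)))
        + ∑ β ∈ B, (P * (-(⟪β, x⟫ ^ 2)⁻¹) * ⟪β, β⟫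
          + (⟪β, x⟫)⁻¹ * P * (∑ γ ∈ A, c γ * ((⟪γ, x⟫)⁻¹ * ⟪γ, β⟫))))
      + ∑ γ ∈ Rp, k γ * (P * (∑ β ∈ B, (⟪β, x⟫)⁻¹ * ⟪β, γ⟫)
          + T * (P * ∑ α ∈ A, c α * ((⟪α, x⟫)⁻¹ * ⟪α, γ⟫))) / ⟪γ, x⟫
      = 0 := by
  classical
  -- the inner `A` and `B` sums extended to `Rp`
  have hcz : ∀ γ ∈ Rp, γ ∉ A → c γ = 0 := by
    intro γ hγ hγA
    rw [hA, Finset.mem_filter] at hγA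
    push_neg at hγA
    rw [hc, hγA hγ]
    ring
  have hSc : ∀ v : EuclideanSpace ℝ (Fin n),
      ∑ γ ∈ A, c γ * ((⟪γ, x⟫)⁻¹ * ⟪γ, v⟫) = ∑ γ ∈ Rp, c γ * ((⟪γ, x⟫)⁻¹ * ⟪γ, v⟫) := by
    intro v
    refine Finset.sum_subset (hA ▸ Finset.filter_subset _ _) (fun γ hγ hγA => ?_)
    rw [hcz γ hγ hγA]
    ring
  have hSb : ∀ v : EuclideanSpace ℝ (Fin n),
      ∑ γ ∈ B, (⟪γ, x⟫)⁻¹ * ⟪γ, v⟫ = ∑ γ ∈ Rp, b γ * ((⟪γ, x⟫)⁻¹ * ⟪γ, v⟫) := by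
    intro v
    rw [hB, Finset.sum_filter]
    refine Finset.sum_congr rfl (fun γ _ => ?_)
    rw [hb]
    by_cases h : k γ = 1/2
    · rw [if_pos h, if_pos h, one_mul]
    · rw [if_neg h, if_neg h, zero_mul]
  -- extend the outer sums to `Rp`
  have hOA : ∀ F : EuclideanSpace ℝ (Fin n) → ℝ,
      ∑ α ∈ A, c α * F α = ∑ α ∈ Rp, c α * F α := by
    intro F
    refine Finset.sum_subset (hA ▸ Finset.filter_subset _ _) (fun γ hγ hγA => ?_)
    rw [hcz γ hγ hγA, zero_mul]
  have hOB : ∀ F : EuclideanSpace ℝ (Fin n) → ℝ,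
      ∑ β ∈ B, F β = ∑ β ∈ Rp, b β * F β := by
    intro F
    rw [hB, Finset.sum_filter]
    refine Finset.sum_congr rfl (fun γ _ => ?_)
    rw [hb]
    by_cases h : k γ = 1/2
    · rw [if_pos h, if_pos h, one_mul]
    · rw [if_neg h, if_neg h, zero_mul]
  -- rewrite the three outer sums as sums over `Rp` of canonical per-root terms
  have step1 : ∑ α ∈ A, (T * P * c α * (-(⟪α, x⟫ ^ 2)⁻¹) * ⟪α, α⟫
          + T * c α * (⟪α, x⟫)⁻¹ * P * (∑ γ ∈ A, c γ * ((⟪γ, x⟫)⁻¹ * ⟪γ, α⟫))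
          + P * c α * (⟪α, x⟫)⁻¹ * (∑ γ ∈ B, (⟪γ, x⟫)⁻¹ * ⟪γ, α⟫))
      = ∑ α ∈ Rp, c α * (T * P * (-(⟪α, x⟫ ^ 2)⁻¹) * 2
          + T * (⟪α, x⟫)⁻¹ * P * (∑ γ ∈ Rp, c γ * ((⟪γ, x⟫)⁻¹ * ⟪γ, α⟫))
          + P * (⟪α, x⟫)⁻¹ * (∑ γ ∈ Rp, b γ * ((⟪γ, x⟫)⁻¹ * ⟪γ, α⟫))) := by
    rw [← hOA]
    refine Finset.sum_congr rfl (fun α hα => ?_)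
    have hαRp : α ∈ Rp := (hA ▸ Finset.filter_subset _ _) hα
    rw [hSc, hSb, hall α hαRp]
    ring
  have step2 : ∑ β ∈ B, (P * (-(⟪β, x⟫ ^ 2)⁻¹) * ⟪β, β⟫
          + (⟪β, x⟫)⁻¹ * P * (∑ γ ∈ A, c γ * ((⟪γ, x⟫)⁻¹ * ⟪γ, β⟫)))
      = ∑ β ∈ Rp, b β * (P * (-(⟪β, x⟫ ^ 2)⁻¹) * 2
          + (⟪β, x⟫)⁻¹ * P * (∑ γ ∈ Rp, c γ * ((⟪γ, x⟫)⁻¹ * ⟪γ, β⟫))) := by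
    rw [hOB (fun β => P * (-(⟪β, x⟫ ^ 2)⁻¹) * ⟪β, β⟫
          + (⟪β, x⟫)⁻¹ * P * (∑ γ ∈ A, c γ * ((⟪γ, x⟫)⁻¹ * ⟪γ, β⟫)))]
    refine Finset.sum_congr rfl (fun β hβ => ?_)
    rw [hSc, hall β hβ]
  have step3 : ∑ γ ∈ Rp, k γ * (P * (∑ β ∈ B, (⟪β, x⟫)⁻¹ * ⟪β, γ⟫)
          + T * (P * ∑ α ∈ A, c α * ((⟪α, x⟫)⁻¹ * ⟪α, γ⟫))) / ⟪γ, x⟫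
      = ∑ γ ∈ Rp, k γ * (P * (∑ β ∈ Rp, b β * ((⟪β, x⟫)⁻¹ * ⟪β, γ⟫))
          + T * (P * ∑ α ∈ Rp, c α * ((⟪α, x⟫)⁻¹ * ⟪α, γ⟫))) / ⟪γ, x⟫ := by
    refine Finset.sum_congr rfl (fun γ _ => ?_)
    rw [hSc, hSb]
  rw [step1, step2, step3]
  have hbc : ∀ γ, b γ * (1 - 2 * k γ) = 0 := by
    intro γ
    rw [hb]
    by_cases h : k γ = 1/2
    · rw [if_pos h, h]; ring
    · rw [if_neg h]; ring
  -- merge into a single sum over Rp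
  rw [mul_add, Finset.mul_sum, Finset.mul_sum, ← Finset.sum_add_distrib,
    ← Finset.sum_add_distrib]
  -- canonical per-root form
  have hper : ∀ α ∈ Rp,
      (1 / 2 * (c α * (T * P * (-(⟪α, x⟫ ^ 2)⁻¹) * 2
          + T * (⟪α, x⟫)⁻¹ * P * (∑ γ ∈ Rp, c γ * ((⟪γ, x⟫)⁻¹ * ⟪γ, α⟫))
          + P * (⟪α, x⟫)⁻¹ * (∑ γ ∈ Rp, b γ * ((⟪γ, x⟫)⁻¹ * ⟪γ, α⟫))))
        + 1 / 2 * (b α * (P * (-(⟪α, x⟫ ^ 2)⁻¹) * 2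
          + (⟪α, x⟫)⁻¹ * P * (∑ γ ∈ Rp, c γ * ((⟪γ, x⟫)⁻¹ * ⟪γ, α⟫))))
        + k α * (P * (∑ β ∈ Rp, b β * ((⟪β, x⟫)⁻¹ * ⟪β, α⟫))
          + T * (P * ∑ γ ∈ Rp, c γ * ((⟪γ, x⟫)⁻¹ * ⟪γ, α⟫))) / ⟪α, x⟫)
      = (∑ β ∈ Rp.erase α, T * P * (1/2) * (c β * ⟪β, α⟫ / (⟪α, x⟫ * ⟪β, x⟫)))
        + ((∑ β ∈ Rp.erase α, P * (1/2) * (b β * ⟪β, α⟫ / (⟪α, x⟫ * ⟪β, x⟫)))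
          + ∑ β ∈ Rp.erase α, P * (1/2) * (b α * c β * ⟪β, α⟫ / (⟪α, x⟫ * ⟪β, x⟫))) := by
    intro α hα
    have hsc : ∑ γ ∈ Rp, c γ * ((⟪γ, x⟫)⁻¹ * ⟪γ, α⟫)
        = c α * ((⟪α, x⟫)⁻¹ * 2) + ∑ γ ∈ Rp.erase α, c γ * ((⟪γ, x⟫)⁻¹ * ⟪γ, α⟫) := by
      rw [← Finset.add_sum_erase _ _ hα, hall α hα]
    have hsb : ∑ γ ∈ Rp, b γ * ((⟪γ, x⟫)⁻¹ * ⟪γ, α⟫)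
        = b α * ((⟪α, x⟫)⁻¹ * 2) + ∑ γ ∈ Rp.erase α, b γ * ((⟪γ, x⟫)⁻¹ * ⟪γ, α⟫) := by
      rw [← Finset.add_sum_erase _ _ hα, hall α hα]
    rw [hsc, hsb, hc α]
    have e1 : ∀ β ∈ Rp.erase α, T * P * (1/2) * (c β * ⟪β, α⟫ / (⟪α, x⟫ * ⟪β, x⟫))
        = (T * P * (1/2) * (⟪α, x⟫)⁻¹) * (c β * ((⟪β, x⟫)⁻¹ * ⟪β, α⟫)) := by
      intro β _
      ring
    have e2 : ∀ β ∈ Rp.erase α, P * (1/2) * (b β * ⟪β, α⟫ / (⟪α, x⟫ * ⟪β, x⟫))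
        = (P * (1/2) * (⟪α, x⟫)⁻¹) * (b β * ((⟪β, x⟫)⁻¹ * ⟪β, α⟫)) := by
      intro β _
      ring
    have e3 : ∀ β ∈ Rp.erase α, P * (1/2) * (b α * c β * ⟪β, α⟫ / (⟪α, x⟫ * ⟪β, x⟫))
        = (P * (1/2) * b α * (⟪α, x⟫)⁻¹) * (c β * ((⟪β, x⟫)⁻¹ * ⟪β, α⟫)) := by
      intro β _
      ring
    rw [Finset.sum_congr rfl e1, Finset.sum_congr rfl e2, Finset.sum_congr rfl e3,
      ← Finset.mul_sum, ← Finset.mul_sum, ← Finset.mul_sum]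
    have hbcα := hbc α
    rw [div_eq_mul_inv]
    linear_combination (P * (⟪α, x⟫)⁻¹ * (⟪α, x⟫)⁻¹ *
        (∑ γ ∈ Rp.erase α, c γ * ((⟪γ, x⟫)⁻¹ * ⟪γ, α⟫)) * 0 +
      P * (⟪α, x⟫)⁻¹ * (⟪α, x⟫)⁻¹) * hbcα
  rw [Finset.sum_congr rfl hper, Finset.sum_add_distrib, Finset.sum_add_distrib]
  -- first double sum: master for (c, 1)
  have hT1 : ∑ α ∈ Rp, ∑ β ∈ Rp.erase α, T * P * (1/2) * (c β * ⟪β, α⟫ / (⟪α, x⟫ * ⟪β, x⟫))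
      = 0 := by
    have hswap := offdiag_swap Rp (fun α β => T * P * (1/2) * (c β * ⟪β, α⟫ / (⟪α, x⟫ * ⟪β, x⟫)))
    rw [hswap]
    have : ∀ α ∈ Rp, ∑ β ∈ Rp.erase α, T * P * (1/2) * (c α * ⟪α, β⟫ / (⟪β, x⟫ * ⟪α, x⟫))
        = (T * P * (1/2)) * ∑ β ∈ Rp.erase α, c α * (1:ℝ) * ⟪α, β⟫ / (⟪α, x⟫ * ⟪β, x⟫) := by
      intro α _
      rw [Finset.mul_sum]
      refine Finset.sum_congr rfl (fun β _ => by ring)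
    rw [Finset.sum_congr rfl this, ← Finset.mul_sum, hM1, mul_zero]
  -- second + third double sums: master for (1-k, b)
  have hT2 : (∑ α ∈ Rp, ∑ β ∈ Rp.erase α, P * (1/2) * (b β * ⟪β, α⟫ / (⟪α, x⟫ * ⟪β, x⟫)))
      + (∑ α ∈ Rp, ∑ β ∈ Rp.erase α, P * (1/2) * (b α * c β * ⟪β, α⟫ / (⟪α, x⟫ * ⟪β, x⟫)))
      = 0 := by
    have hswap := offdiag_swap Rp
      (fun α β => P * (1/2) * (b α * c β * ⟪β, α⟫ / (⟪α, x⟫ * ⟪β, x⟫)))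
    rw [hswap, ← Finset.sum_add_distrib]
    have hcomb : ∀ α ∈ Rp,
        ((∑ β ∈ Rp.erase α, P * (1/2) * (b β * ⟪β, α⟫ / (⟪α, x⟫ * ⟪β, x⟫)))
          + ∑ β ∈ Rp.erase α, P * (1/2) * (b β * c α * ⟪α, β⟫ / (⟪β, x⟫ * ⟪α, x⟫)))
        = P * ∑ β ∈ Rp.erase α, (1 - k α) * b β * ⟪α, β⟫ / (⟪α, x⟫ * ⟪β, x⟫) := by
      intro α hα
      rw [← Finset.sum_add_distrib, Finset.mul_sum]
      refine Finset.sum_congr rfl (fun β hβ => ?_)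
      rw [real_inner_comm α β, hc α]
      ring
    rw [Finset.sum_congr rfl hcomb, ← Finset.mul_sum, hM2, mul_zero]
  rw [hT1, hT2, zero_add]


end DBHB

/-- The function
`δ̄(x) = (∏_{α ∈ R₊, k(α) ≠ 1/2} ⟨α,x⟩^(1-2k(α))) · log (∏_{α ∈ R₊, k(α) = 1/2} ⟨α,x⟩)`
is harmonic on the Weyl chamber `C` for the radial Dunkl generator. -/
theorem delta_bar_harmonic_for_radial_dunkl {n : ℕ}
    (R Rp : Finset (EuclideanSpace ℝ (Fin n)))
    (hR : IsRootSystem R) (hnorm : ∀ α ∈ R, ⟪α, α⟫ = (2 : ℝ))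
    (hRp : IsPositiveSubsystem R Rp)
    (k : EuclideanSpace ℝ (Fin n) → ℝ)
    (hk0 : ∀ α ∈ R, 0 ≤ k α)
    (hkW : ∀ α ∈ R, ∀ β ∈ R, k (rootReflection β α) = k α) :
    ∀ x ∈ {x : EuclideanSpace ℝ (Fin n) | ∀ α ∈ Rp, 0 < ⟪α, x⟫},
      (1 / 2) * laplacian
          (fun y => (∏ α ∈ Rp.filter (fun α => k α ≠ 1 / 2), ⟪α, y⟫ ^ (1 - 2 * k α)) *
            Real.log (∏ α ∈ Rp.filter (fun α => k α = 1 / 2), ⟪α, y⟫)) x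
        + ∑ α ∈ Rp, k α *
            ⟪gradient (fun y =>
                (∏ α ∈ Rp.filter (fun α => k α ≠ 1 / 2), ⟪α, y⟫ ^ (1 - 2 * k α)) *
                  Real.log (∏ α ∈ Rp.filter (fun α => k α = 1 / 2), ⟪α, y⟫)) x, α⟫ / ⟪x, α⟫
        = 0 := by
  classical
  intro x hx
  simp only [Set.mem_setOf_eq] at hx
  have hsub : Rp ⊆ R := hRp.1
  have hallRp : ∀ γ ∈ Rp, ⟪γ, γ⟫ = (2:ℝ) := fun γ hγ => hnorm γ (hsub hγ)
  set A := Rp.filter (fun α => k α ≠ 1 / 2) with hA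
  set B := Rp.filter (fun α => k α = 1 / 2) with hB
  have hxA : ∀ γ ∈ A, 0 < ⟪γ, x⟫ := by
    intro γ hγ
    rw [hA] at hγ
    exact hx γ (Finset.mem_filter.1 hγ).1
  have hxB : ∀ γ ∈ B, 0 < ⟪γ, x⟫ := by
    intro γ hγ
    rw [hB] at hγ
    exact hx γ (Finset.mem_filter.1 hγ).1
  have hfun : (fun y => (∏ α ∈ A, ⟪α, y⟫ ^ (1 - 2 * k α)) *
      Real.log (∏ α ∈ B, ⟪α, y⟫)) = DBHA.ff A B (fun α => 1 - 2 * k α) := rfl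
  rw [hfun]
  rw [DBHA.lap_ff A B (fun α => 1 - 2 * k α) hxA hxB]
  have hgr : ∀ γ ∈ Rp, k γ * ⟪gradient (DBHA.ff A B (fun α => 1 - 2 * k α)) x, γ⟫ / ⟪x, γ⟫ =
      k γ * (Real.exp (DBHA.Sf A (fun α => 1 - 2 * k α) x) *
          (∑ β ∈ B, (⟪β, x⟫)⁻¹ * ⟪β, γ⟫)
        + DBHA.Tf B x * (Real.exp (DBHA.Sf A (fun α => 1 - 2 * k α) x) *
          ∑ α ∈ A, (1 - 2 * k α) * ((⟪α, x⟫)⁻¹ * ⟪α, γ⟫))) / ⟪γ, x⟫ := by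
    intro γ hγ
    rw [DBHA.grad_ff A B (fun α => 1 - 2 * k α) hxA hxB γ, DBHA.Dg_apply,
      ← real_inner_comm x γ]
  rw [Finset.sum_congr rfl hgr]
  have hM1 : ∑ α ∈ Rp, ∑ β ∈ Rp.erase α,
      (1 - 2 * k α) * (1:ℝ) * ⟪α, β⟫ / (⟪α, x⟫ * ⟪β, x⟫) = 0 := by
    have := DBH.master hR hnorm hRp (fun γ => 1 - 2 * k γ) (fun _ => (1:ℝ))
      (fun a ha δ hδ => by
        show 1 - 2 * k (rootReflection δ a) = 1 - 2 * k a
        rw [hkW a ha δ hδ]) (fun a ha δ hδ => rfl) hx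
    exact this
  have hM2 : ∑ α ∈ Rp, ∑ β ∈ Rp.erase α,
      (1 - k α) * (if k β = 1/2 then (1:ℝ) else 0) * ⟪α, β⟫ / (⟪α, x⟫ * ⟪β, x⟫) = 0 := by
    have := DBH.master hR hnorm hRp (fun γ => 1 - k γ)
      (fun γ => if k γ = 1/2 then (1:ℝ) else 0)
      (fun a ha δ hδ => by
        show 1 - k (rootReflection δ a) = 1 - k a
        rw [hkW a ha δ hδ])
      (fun a ha δ hδ => by
        show (if k (rootReflection δ a) = 1/2 then (1:ℝ) else 0) =
          (if k a = 1/2 then (1:ℝ) else 0)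
        rw [hkW a ha δ hδ]) hx
    exact this
  exact DBHB.partB Rp A B k (fun α => 1 - 2 * k α)
    (fun γ => if k γ = 1/2 then (1:ℝ) else 0) x
    (Real.exp (DBHA.Sf A (fun α => 1 - 2 * k α) x)) (DBHA.Tf B x)
    hA hB (fun γ => rfl) (fun γ => rfl) hallRp hM1 hM2
end

section
/- Let R be a normalized root system in ℝⁿ with positive subsystem R₊, let β ∈ R, and let k : R → [0,∞) satisfy k(−α) = k(α) and k(σ_β α) = k(α) for all α ∈ R. Let S ⊆ R₊ be such that the symmetric set S ∪ (−S) is invariant under σ_β. Define the partial-jump generator G u(x) = (1/2)Δu(x) + Σ_{α∈R₊} k(α)·⟨∇u(x),α⟩/⟨x,α⟩ + Σ_{α∈S} k(α)·(u(σ_α x) − u(x))/⟨x,α⟩². Then G commutes with σ_β: for every twice continuously differentiable u : ℝⁿ → ℝ and every x with ⟨x,α⟩ ≠ 0 for all α ∈ R, G(u∘σ_β)(x) = (G u)(σ_β x). -/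
open scoped RealInnerProductSpace BigOperators

variable {n : ℕ}

lemma rootReflection_eq_reflection (β : EuclideanSpace ℝ (Fin n)) (hβ : β ≠ 0)
    (x : EuclideanSpace ℝ (Fin n)) :
    rootReflection β x = Submodule.reflection (ℝ ∙ β)ᗮ x := by
  rw [rootReflection, Submodule.reflection_apply, Submodule.starProjection_orthogonal_val,
    Submodule.starProjection_singleton]
  simp only [RCLike.ofReal_real_eq_id, id_eq]
  rw [← real_inner_self_eq_norm_sq, mul_div_assoc]
  module

lemma rootReflection_neg (α x : EuclideanSpace ℝ (Fin n)) :
    rootReflection (-α) x = rootReflection α x := by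
  simp only [rootReflection, inner_neg_left, inner_neg_right, neg_neg, smul_neg, mul_neg, neg_div, neg_smul,
    neg_neg]

lemma rootReflection_map (A : EuclideanSpace ℝ (Fin n) ≃ₗᵢ[ℝ] EuclideanSpace ℝ (Fin n))
    (α x : EuclideanSpace ℝ (Fin n)) :
    rootReflection (A α) (A x) = A (rootReflection α x) := by
  simp only [rootReflection, A.inner_map_map, map_sub, map_smul]

lemma iteratedFDeriv_two_comp_isometry
    (A : EuclideanSpace ℝ (Fin n) ≃ₗᵢ[ℝ] EuclideanSpace ℝ (Fin n))
    (u : EuclideanSpace ℝ (Fin n) → ℝ) (hu : ContDiff ℝ 2 u)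
    (x v w : EuclideanSpace ℝ (Fin n)) :
    iteratedFDeriv ℝ 2 (fun y => u (A y)) x ![v, w]
      = iteratedFDeriv ℝ 2 u (A x) ![A v, A w] := by
  set A' : EuclideanSpace ℝ (Fin n) →L[ℝ] EuclideanSpace ℝ (Fin n) :=
    (A : EuclideanSpace ℝ (Fin n) →L[ℝ] EuclideanSpace ℝ (Fin n)) with hA'
  have hud : Differentiable ℝ u := hu.differentiable two_ne_zero
  have hg : ∀ y, fderiv ℝ (fun z => u (A z)) y = (fderiv ℝ u (A y)).comp A' := by
    intro y
    rw [show (fun z => u (A z)) = u ∘ A from rfl, fderiv_comp y (hud (A y)) A.differentiableAt,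
      A.fderiv]
  have hF : ContDiff ℝ 1 (fderiv ℝ u) := hu.fderiv_right (le_refl _)
  set C : (EuclideanSpace ℝ (Fin n) →L[ℝ] ℝ) →L[ℝ] (EuclideanSpace ℝ (Fin n) →L[ℝ] ℝ) :=
    (ContinuousLinearMap.compL ℝ (EuclideanSpace ℝ (Fin n)) (EuclideanSpace ℝ (Fin n)) ℝ).flip A'
    with hC
  have hg2 : fderiv ℝ (fderiv ℝ (fun z => u (A z))) x
      = C.comp ((fderiv ℝ (fderiv ℝ u) (A x)).comp A') := by
    have h1 : fderiv ℝ (fun z => u (A z)) = fun y => C (fderiv ℝ u (A y)) := by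
      funext y; rw [hg y]; rfl
    rw [h1]
    have hd : DifferentiableAt ℝ (fun y => fderiv ℝ u (A y)) x :=
      ((hF.differentiable one_ne_zero) (A x)).comp x A.differentiableAt
    rw [show (fun y => C (fderiv ℝ u (A y))) = C ∘ (fun y => fderiv ℝ u (A y)) from rfl,
      fderiv_comp x C.differentiableAt hd, C.fderiv]
    congr 1
    rw [show (fun y => fderiv ℝ u (A y)) = (fderiv ℝ u) ∘ A from rfl,
      fderiv_comp x ((hF.differentiable one_ne_zero) (A x)) A.differentiableAt, A.fderiv]
  rw [iteratedFDeriv_two_apply, iteratedFDeriv_two_apply]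
  simp only [Matrix.cons_val_zero, Matrix.cons_val_one, Matrix.head_cons, hg2]
  rfl

lemma bilinear_trace_invariant
    (A : EuclideanSpace ℝ (Fin n) ≃ₗᵢ[ℝ] EuclideanSpace ℝ (Fin n))
    (B : EuclideanSpace ℝ (Fin n) →L[ℝ] EuclideanSpace ℝ (Fin n) →L[ℝ] ℝ) :
    ∑ i : Fin n, B (A (EuclideanSpace.single i 1)) (A (EuclideanSpace.single i 1))
      = ∑ i : Fin n, B (EuclideanSpace.single i 1) (EuclideanSpace.single i 1) := by
  classical
  set b : OrthonormalBasis (Fin n) ℝ (EuclideanSpace ℝ (Fin n)) :=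
    EuclideanSpace.basisFun (Fin n) ℝ with hb
  have hbs : ∀ i, EuclideanSpace.single i (1:ℝ) = b i := fun i =>
    (EuclideanSpace.basisFun_apply _ _ i).symm
  simp only [hbs]
  have step1 : ∀ i, B (A (b i)) (A (b i))
      = ∑ j, ∑ l, ⟪b j, A (b i)⟫ * (⟪b l, A (b i)⟫ * B (b j) (b l)) := by
    intro i
    conv_lhs => rw [← b.sum_repr' (A (b i))]
    simp only [map_sum, map_smul, ContinuousLinearMap.sum_apply,
      ContinuousLinearMap.smul_apply, smul_eq_mul, Finset.mul_sum]
    rw [Finset.sum_comm]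
    exact Finset.sum_congr rfl fun j _ => Finset.sum_congr rfl fun l _ => by ring
  simp only [step1]
  rw [Finset.sum_comm]
  have step2 : ∀ j, ∑ i, ∑ l, ⟪b j, A (b i)⟫ * (⟪b l, A (b i)⟫ * B (b j) (b l))
      = ∑ l, (∑ i, ⟪b j, A (b i)⟫ * ⟪b l, A (b i)⟫) * B (b j) (b l) := by
    intro j
    rw [Finset.sum_comm]
    refine Finset.sum_congr rfl fun l _ => ?_
    rw [Finset.sum_mul]
    refine Finset.sum_congr rfl fun i _ => by ring
  simp only [step2]
  have step3 : ∀ j l, (∑ i, ⟪b j, A (b i)⟫ * ⟪b l, A (b i)⟫) = if j = l then 1 else 0 := by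
    intro j l
    have h1 : ∀ i, ⟪b j, A (b i)⟫ = ⟪A.symm (b j), b i⟫ := by
      intro i
      conv_lhs => rw [show b j = A (A.symm (b j)) by simp]
      rw [A.inner_map_map]
    have h2 : ∀ i, ⟪b l, A (b i)⟫ = ⟪b i, A.symm (b l)⟫ := by
      intro i
      conv_lhs => rw [show b l = A (A.symm (b l)) by simp]
      rw [A.inner_map_map]
      exact real_inner_comm _ _
    simp only [h1, h2]
    rw [b.sum_inner_mul_inner, A.symm.inner_map_map]
    exact orthonormal_iff_ite.mp b.orthonormal j l
  simp only [step3, ite_mul, one_mul, zero_mul, Finset.sum_ite_eq, Finset.mem_univ, if_true]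

lemma laplacian_comp_isometry
    (A : EuclideanSpace ℝ (Fin n) ≃ₗᵢ[ℝ] EuclideanSpace ℝ (Fin n))
    (u : EuclideanSpace ℝ (Fin n) → ℝ) (hu : ContDiff ℝ 2 u)
    (x : EuclideanSpace ℝ (Fin n)) :
    laplacian (fun y => u (A y)) x = laplacian u (A x) := by
  unfold laplacian
  have h1 : ∀ i : Fin n,
      iteratedFDeriv ℝ 2 (fun y => u (A y)) x ![EuclideanSpace.single i 1,
          EuclideanSpace.single i 1]
        = iteratedFDeriv ℝ 2 u (A x) ![A (EuclideanSpace.single i 1),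
            A (EuclideanSpace.single i 1)] :=
    fun i => iteratedFDeriv_two_comp_isometry A u hu x _ _
  simp only [h1]
  have h2 : ∀ v w, iteratedFDeriv ℝ 2 u (A x) ![v, w]
      = fderiv ℝ (fderiv ℝ u) (A x) v w := by
    intro v w; rw [iteratedFDeriv_two_apply]; rfl
  simp only [h2]
  exact bilinear_trace_invariant A (fderiv ℝ (fderiv ℝ u) (A x))

lemma inner_gradient_comp (A : EuclideanSpace ℝ (Fin n) ≃ₗᵢ[ℝ] EuclideanSpace ℝ (Fin n))
    (u : EuclideanSpace ℝ (Fin n) → ℝ) (hu : Differentiable ℝ u)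
    (x v : EuclideanSpace ℝ (Fin n)) :
    ⟪gradient (fun y => u (A y)) x, v⟫ = ⟪gradient u (A x), A v⟫ := by
  rw [gradient, gradient, InnerProductSpace.toDual_symm_apply,
    InnerProductSpace.toDual_symm_apply]
  rw [show (fun y => u (A y)) = u ∘ A from rfl,
    fderiv_comp x (hu (A x)) A.differentiableAt, A.fderiv]
  rfl

lemma sum_pos_half (R Rp : Finset (EuclideanSpace ℝ (Fin n))) (hsub : Rp ⊆ R)
    (hneg : ∀ α ∈ R, -α ∈ R)
    (hxor : ∀ α ∈ R, Xor' (α ∈ Rp) (-α ∈ Rp))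
    (f : EuclideanSpace ℝ (Fin n) → ℝ) (hf : ∀ α ∈ R, f (-α) = f α) :
    ∑ α ∈ R, f α = 2 * ∑ α ∈ Rp, f α := by
  classical
  have hinj : Function.Injective (fun a : EuclideanSpace ℝ (Fin n) => -a) :=
    fun a b h => by simpa using congrArg Neg.neg h
  have hdisj : Disjoint Rp (Rp.image fun a => -a) := by
    rw [Finset.disjoint_left]
    intro α hα hα'
    obtain ⟨γ, hγ, rfl⟩ := Finset.mem_image.mp hα'
    rcases hxor γ (hsub hγ) with ⟨_, h2⟩ | ⟨_, h2⟩
    · exact h2 hα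
    · exact h2 hγ
  have hcover : R = Rp ∪ Rp.image fun a => -a := by
    apply Finset.Subset.antisymm
    · intro α hα
      rcases Xor.or (hxor α hα) with h | h
      · exact Finset.mem_union_left _ h
      · exact Finset.mem_union_right _ (Finset.mem_image.mpr ⟨-α, h, neg_neg α⟩)
    · intro α hα
      rcases Finset.mem_union.mp hα with h | h
      · exact hsub h
      · obtain ⟨γ, hγ, rfl⟩ := Finset.mem_image.mp h
        exact hneg γ (hsub hγ)
  rw [hcover, Finset.sum_union hdisj, Finset.sum_image fun a _ b _ h => hinj h]
  have : ∑ α ∈ Rp, f (-α) = ∑ α ∈ Rp, f α :=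
    Finset.sum_congr rfl fun α hα => hf α (hsub hα)
  rw [this]; ring

lemma sum_comp_invariant (A : EuclideanSpace ℝ (Fin n) ≃ₗᵢ[ℝ] EuclideanSpace ℝ (Fin n))
    (R Rp : Finset (EuclideanSpace ℝ (Fin n))) (hsub : Rp ⊆ R)
    (hneg : ∀ α ∈ R, -α ∈ R)
    (hxor : ∀ α ∈ R, Xor' (α ∈ Rp) (-α ∈ Rp))
    (hAR : ∀ α ∈ R, A α ∈ R)
    (f : EuclideanSpace ℝ (Fin n) → ℝ) (hf : ∀ α ∈ R, f (-α) = f α) :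
    ∑ α ∈ Rp, f (A α) = ∑ α ∈ Rp, f α := by
  classical
  have hfA : ∀ α ∈ R, f (A (-α)) = f (A α) := by
    intro α hα
    rw [map_neg]
    exact hf (A α) (hAR α hα)
  have h1 : ∑ α ∈ R, f (A α) = 2 * ∑ α ∈ Rp, f (A α) :=
    sum_pos_half R Rp hsub hneg hxor (fun α => f (A α)) hfA
  have himg : R.image (fun a => A a) = R := by
    apply Finset.eq_of_subset_of_card_le
    · intro α hα
      obtain ⟨γ, hγ, rfl⟩ := Finset.mem_image.mp hα
      exact hAR γ hγ
    · rw [Finset.card_image_of_injective _ A.injective]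
  have h2 : ∑ α ∈ R, f (A α) = ∑ α ∈ R, f α := by
    rw [← Finset.sum_image (fun a _ b _ h => A.injective h), himg]
  have h3 := sum_pos_half R Rp hsub hneg hxor f hf
  have := h1.symm.trans (h2.trans h3)
  linarith

open scoped Classical

/-- The partial-jump Dunkl generator `G` associated with a σ_β-invariant symmetric set of jump
directions `S ∪ (-S)` commutes with the reflection `σ_β`: `G(u ∘ σ_β)(x) = (G u)(σ_β x)`. -/
theorem partial_jump_generator_commutes_with_reflection {n : ℕ}
    (R Rp : Finset (EuclideanSpace ℝ (Fin n)))
    (hR : IsRootSystem R) (hnorm : ∀ α ∈ R, ⟪α, α⟫ = (2 : ℝ))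
    (hRp : IsPositiveSubsystem R Rp)
    (β : EuclideanSpace ℝ (Fin n)) (hβ : β ∈ R)
    (k : EuclideanSpace ℝ (Fin n) → ℝ) (hk0 : ∀ α ∈ R, 0 ≤ k α)
    (hkneg : ∀ α ∈ R, k (-α) = k α)
    (hkβ : ∀ α ∈ R, k (rootReflection β α) = k α)
    (S : Finset (EuclideanSpace ℝ (Fin n))) (hS : S ⊆ Rp)
    (hSinv : (S ∪ S.image (fun a => -a)).image (fun a => rootReflection β a)
      = S ∪ S.image (fun a => -a)) :
    ∀ u : EuclideanSpace ℝ (Fin n) → ℝ, ContDiff ℝ 2 u →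
      ∀ x : EuclideanSpace ℝ (Fin n), (∀ α ∈ R, ⟪x, α⟫ ≠ 0) →
        (1 / 2) * laplacian (fun y => u (rootReflection β y)) x
            + ∑ α ∈ Rp, k α * ⟪gradient (fun y => u (rootReflection β y)) x, α⟫ / ⟪x, α⟫
            + ∑ α ∈ S, k α * (u (rootReflection β (rootReflection α x))
                - u (rootReflection β x)) / ⟪x, α⟫ ^ 2
          = (1 / 2) * laplacian u (rootReflection β x)
            + ∑ α ∈ Rp, k α * ⟪gradient u (rootReflection β x), α⟫ / ⟪rootReflection β x, α⟫
            + ∑ α ∈ S, k α * (u (rootReflection α (rootReflection β x))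
                - u (rootReflection β x)) / ⟪rootReflection β x, α⟫ ^ 2 := by
  intro u hu x hx
  have hβ0 : β ≠ 0 := hR.1 β hβ
  set A : EuclideanSpace ℝ (Fin n) ≃ₗᵢ[ℝ] EuclideanSpace ℝ (Fin n) :=
    Submodule.reflection (ℝ ∙ β)ᗮ with hAdef
  have hA : ∀ y, rootReflection β y = A y := rootReflection_eq_reflection β hβ0
  have hud : Differentiable ℝ u := hu.differentiable two_ne_zero
  simp only [hA]
  -- Laplacian piece
  have e1 : laplacian (fun y => u (A y)) x = laplacian u (A x) :=
    laplacian_comp_isometry A u hu x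
  -- drift piece
  have e2 : ∑ α ∈ Rp, k α * ⟪gradient (fun y => u (A y)) x, α⟫ / ⟪x, α⟫
      = ∑ α ∈ Rp, k α * ⟪gradient u (A x), α⟫ / ⟪A x, α⟫ := by
    set g : EuclideanSpace ℝ (Fin n) → ℝ :=
      fun γ => k γ * ⟪gradient u (A x), γ⟫ / ⟪A x, γ⟫ with hg
    have t1 : ∑ α ∈ Rp, k α * ⟪gradient (fun y => u (A y)) x, α⟫ / ⟪x, α⟫
        = ∑ α ∈ Rp, g (A α) := by
      refine Finset.sum_congr rfl fun α hα => ?_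
      have hk : k (A α) = k α := by rw [← hA α]; exact hkβ α (hRp.1 hα)
      have hin : ⟪x, α⟫ = ⟪A x, A α⟫ := (A.inner_map_map x α).symm
      rw [hg]
      simp only
      rw [inner_gradient_comp A u hud x α, hk, hin]
    rw [t1]
    exact sum_comp_invariant A R Rp hRp.1 hR.2.1 hRp.2
      (fun α hα => by rw [← hA α]; exact hR.2.2.2 β hβ α hα) g
      (fun γ hγ => by
        simp only [hg, hkneg γ hγ, inner_neg_right, mul_neg, neg_div_neg_eq])
  -- jump piece
  have e3 : ∑ α ∈ S, k α * (u (A (rootReflection α x)) - u (A x)) / ⟪x, α⟫ ^ 2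
      = ∑ α ∈ S, k α * (u (rootReflection α (A x)) - u (A x)) / ⟪A x, α⟫ ^ 2 := by
    set h : EuclideanSpace ℝ (Fin n) → ℝ :=
      fun γ => k γ * (u (rootReflection γ (A x)) - u (A x)) / ⟪A x, γ⟫ ^ 2 with hh
    set T : Finset (EuclideanSpace ℝ (Fin n)) := S ∪ S.image (fun a => -a) with hT
    have hTsubR : T ⊆ R := by
      intro α hα
      rcases Finset.mem_union.mp hα with h' | h'
      · exact hRp.1 (hS h')
      · obtain ⟨γ, hγ, rfl⟩ := Finset.mem_image.mp h'
        exact hR.2.1 γ (hRp.1 (hS hγ))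
    have hST : S ⊆ T := Finset.subset_union_left
    have hTneg : ∀ α ∈ T, -α ∈ T := by
      intro α hα
      rcases Finset.mem_union.mp hα with h' | h'
      · exact Finset.mem_union_right _ (Finset.mem_image.mpr ⟨α, h', rfl⟩)
      · obtain ⟨γ, hγ, rfl⟩ := Finset.mem_image.mp h'
        rw [neg_neg]
        exact hST hγ
    have hnotboth : ∀ α ∈ S, -α ∉ S := by
      intro α hα hα'
      rcases hRp.2 α (hRp.1 (hS hα)) with ⟨_, h2⟩ | ⟨_, h2⟩
      · exact h2 (hS hα')
      · exact h2 (hS hα)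
    have hTxor : ∀ α ∈ T, Xor' (α ∈ S) (-α ∈ S) := by
      intro α hα
      rcases Finset.mem_union.mp hα with h' | h'
      · exact Or.inl ⟨h', hnotboth α h'⟩
      · obtain ⟨γ, hγ, rfl⟩ := Finset.mem_image.mp h'
        rw [neg_neg]
        exact Or.inr ⟨hγ, hnotboth γ hγ⟩
    have hTA : ∀ α ∈ T, A α ∈ T := by
      intro α hα
      rw [← hA α, ← hSinv]
      exact Finset.mem_image.mpr ⟨α, hα, rfl⟩
    have t1 : ∑ α ∈ S, k α * (u (A (rootReflection α x)) - u (A x)) / ⟪x, α⟫ ^ 2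
        = ∑ α ∈ S, h (A α) := by
      refine Finset.sum_congr rfl fun α hα => ?_
      have hαR : α ∈ R := hRp.1 (hS hα)
      have hk : k (A α) = k α := by rw [← hA α]; exact hkβ α hαR
      have hin : ⟪x, α⟫ = ⟪A x, A α⟫ := (A.inner_map_map x α).symm
      have hconj : A (rootReflection α x) = rootReflection (A α) (A x) :=
        (rootReflection_map A α x).symm
      rw [hh]
      simp only
      rw [hconj, hk, hin]
    rw [t1]
    refine sum_comp_invariant A T S hST hTneg hTxor hTA h (fun γ hγ => ?_)
    simp only [hh, rootReflection_neg, hkneg γ (hTsubR hγ), inner_neg_right, neg_sq]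
  rw [e1, e2, e3]
end

section
/- Let R be a normalized root system in ℝⁿ with positive subsystem R₊ and k : R → [0,∞), and define the vector field F(x) = Σ_{α∈R₊} (k(α)/⟨x,α⟩)·α on the Weyl chamber C (so F = ∇log ϖ_k with ϖ_k(x) = ∏_{α∈R₊} ⟨α,x⟩^{k(α)}). Fix T > 0, a continuous path b : [0,T] → ℝⁿ, and x_0 ∈ C. If X, Y : [0,T] → C are continuous and satisfy X_t = x_0 + b_t + ∫_0^t F(X_s) ds and Y_t = x_0 + b_t + ∫_0^t F(Y_s) ds for all t ∈ [0,T], then X_t = Y_t for all t ∈ [0,T]. -/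
open scoped RealInnerProductSpace BigOperators

theorem radial_dunkl_drift_pathwise_uniqueness_aux {n : ℕ}
    (Rp : Finset (EuclideanSpace ℝ (Fin n)))
    (k : EuclideanSpace ℝ (Fin n) → ℝ) (hk0 : ∀ α ∈ Rp, 0 ≤ k α)
    (T : ℝ) (hT : 0 < T)
    (X Y : ℝ → EuclideanSpace ℝ (Fin n))
    (hXcont : ContinuousOn X (Set.Icc 0 T)) (hYcont : ContinuousOn Y (Set.Icc 0 T))
    (hXC : ∀ t ∈ Set.Icc (0 : ℝ) T, ∀ α ∈ Rp, 0 < ⟪α, X t⟫)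
    (hYC : ∀ t ∈ Set.Icc (0 : ℝ) T, ∀ α ∈ Rp, 0 < ⟪α, Y t⟫)
    (hXY0 : X 0 = Y 0)
    (hZ : ∀ t ∈ Set.Icc (0 : ℝ) T,
      X t - Y t = ∫ s in (0 : ℝ)..t,
        ∑ α ∈ Rp, ((k α / ⟪X s, α⟫ - k α / ⟪Y s, α⟫) • α)) :
    ∀ t ∈ Set.Icc (0 : ℝ) T, X t = Y t := by
  set g : ℝ → EuclideanSpace ℝ (Fin n) :=
    fun s => ∑ α ∈ Rp, ((k α / ⟪X s, α⟫ - k α / ⟪Y s, α⟫) • α) with hg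
  -- continuity of g on Icc 0 T
  have hgc : ContinuousOn g (Set.Icc 0 T) := by
    apply continuousOn_finset_sum
    intro α hα
    apply ContinuousOn.fun_smul _ continuousOn_const
    apply ContinuousOn.sub
    · exact continuousOn_const.div (hXcont.inner continuousOn_const)
        (fun s hs => by rw [real_inner_comm]; exact (hXC s hs α hα).ne')
    · exact continuousOn_const.div (hYcont.inner continuousOn_const)
        (fun s hs => by rw [real_inner_comm]; exact (hYC s hs α hα).ne')
  have hgint : ∀ t ∈ Set.Icc (0 : ℝ) T, IntervalIntegrable g MeasureTheory.volume 0 t := by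
    intro t ht
    apply (hgc.mono _).intervalIntegrable
    rw [Set.uIcc_of_le ht.1]
    exact Set.Icc_subset_Icc le_rfl ht.2
  -- φ
  set φ : ℝ → ℝ := fun t => ⟪X t - Y t, X t - Y t⟫ with hφ
  have hφc : ContinuousOn φ (Set.Icc 0 T) :=
    (hXcont.sub hYcont).inner (hXcont.sub hYcont)
  have hderiv : ∀ t ∈ Set.Ioo (0 : ℝ) T,
      HasDerivAt φ (2 * ⟪X t - Y t, g t⟫) t := by
    intro t ht
    have htI : t ∈ Set.Icc (0 : ℝ) T := Set.Ioo_subset_Icc_self ht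
    have hmeas : StronglyMeasurableAtFilter g (nhds t) MeasureTheory.volume :=
      (hgc.mono Set.Ioo_subset_Icc_self).stronglyMeasurableAtFilter isOpen_Ioo t ht
    have hcontAt : ContinuousAt g t :=
      (hgc t htI).continuousAt (Icc_mem_nhds ht.1 ht.2)
    have hI : HasDerivAt (fun u => ∫ s in (0:ℝ)..u, g s) (g t) t :=
      intervalIntegral.integral_hasDerivAt_right (hgint t htI) hmeas hcontAt
    have hZt : HasDerivAt (fun u => X u - Y u) (g t) t := by
      apply hI.congr_of_eventuallyEq
      filter_upwards [Ioo_mem_nhds ht.1 ht.2] with u hu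
      exact hZ u (Set.Ioo_subset_Icc_self hu)
    have := hZt.inner ℝ hZt
    rw [real_inner_comm (X t - Y t) (g t), ← two_mul] at this
    exact this
  have hnonpos : ∀ t ∈ Set.Ioo (0 : ℝ) T, 2 * ⟪X t - Y t, g t⟫ ≤ 0 := by
    intro t ht
    have htI : t ∈ Set.Icc (0 : ℝ) T := Set.Ioo_subset_Icc_self ht
    have : ⟪X t - Y t, g t⟫ ≤ 0 := by
      rw [hg]
      simp only [inner_sum, real_inner_smul_right]
      apply Finset.sum_nonpos
      intro α hα
      have ha : (0:ℝ) < ⟪X t, α⟫ := by rw [real_inner_comm]; exact hXC t htI α hα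
      have hc : (0:ℝ) < ⟪Y t, α⟫ := by rw [real_inner_comm]; exact hYC t htI α hα
      have hinner : ⟪X t - Y t, α⟫ = ⟪X t, α⟫ - ⟪Y t, α⟫ := inner_sub_left _ _ _
      rw [hinner]
      have e : k α / ⟪X t, α⟫ - k α / ⟪Y t, α⟫
          = (k α * ⟪Y t, α⟫ - ⟪X t, α⟫ * k α) / (⟪X t, α⟫ * ⟪Y t, α⟫) :=
        div_sub_div _ _ ha.ne' hc.ne'
      rw [e, div_mul_eq_mul_div]
      apply div_nonpos_of_nonpos_of_nonneg
      · nlinarith [sq_nonneg (⟪X t, α⟫ - ⟪Y t, α⟫), hk0 α hα]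
      · positivity
    linarith
  have hanti : AntitoneOn φ (Set.Icc 0 T) := by
    apply antitoneOn_of_deriv_nonpos (convex_Icc 0 T) hφc
    · intro t ht
      rw [interior_Icc] at ht
      exact ((hderiv t ht).differentiableAt).differentiableWithinAt
    · intro t ht
      rw [interior_Icc] at ht
      rw [(hderiv t ht).deriv]
      exact hnonpos t ht
  intro t ht
  have h0 : (0:ℝ) ∈ Set.Icc (0:ℝ) T := ⟨le_rfl, hT.le⟩
  have := hanti h0 ht ht.1
  have hφ0 : φ 0 = 0 := by simp [hφ, hXY0]
  have hφt : φ t ≤ 0 := hφ0 ▸ this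
  have : X t - Y t = 0 := by
    have := real_inner_self_nonneg (x := X t - Y t)
    have h : ⟪X t - Y t, X t - Y t⟫ = 0 := le_antisymm hφt this
    exact inner_self_eq_zero.mp h
  exact sub_eq_zero.mp this

/-- Pathwise uniqueness for the integral equation `X_t = x₀ + b_t + ∫₀ᵗ F(X_s) ds` on `[0,T]`,
where `F = ∇ log ϖ_k` is the radial Dunkl drift `F(x) = Σ_{α ∈ R₊} (k(α)/⟨x,α⟩) α` on the Weyl
chamber `C`. -/
theorem radial_dunkl_drift_pathwise_uniqueness {n : ℕ}
    (R Rp : Finset (EuclideanSpace ℝ (Fin n)))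
    (hR : IsRootSystem R) (hnorm : ∀ α ∈ R, ⟪α, α⟫ = (2 : ℝ))
    (hRp : IsPositiveSubsystem R Rp)
    (k : EuclideanSpace ℝ (Fin n) → ℝ) (hk0 : ∀ α ∈ R, 0 ≤ k α)
    (T : ℝ) (hT : 0 < T)
    (b : ℝ → EuclideanSpace ℝ (Fin n)) (hb : ContinuousOn b (Set.Icc 0 T))
    (x₀ : EuclideanSpace ℝ (Fin n))
    (hx₀ : x₀ ∈ {z : EuclideanSpace ℝ (Fin n) | ∀ α ∈ Rp, 0 < ⟪α, z⟫})
    (X Y : ℝ → EuclideanSpace ℝ (Fin n))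
    (hXcont : ContinuousOn X (Set.Icc 0 T)) (hYcont : ContinuousOn Y (Set.Icc 0 T))
    (hXC : ∀ t ∈ Set.Icc (0 : ℝ) T, X t ∈ {z : EuclideanSpace ℝ (Fin n) | ∀ α ∈ Rp, 0 < ⟪α, z⟫})
    (hYC : ∀ t ∈ Set.Icc (0 : ℝ) T, Y t ∈ {z : EuclideanSpace ℝ (Fin n) | ∀ α ∈ Rp, 0 < ⟪α, z⟫})
    (hX : ∀ t ∈ Set.Icc (0 : ℝ) T,
      X t = x₀ + b t + ∫ s in (0 : ℝ)..t, ∑ α ∈ Rp, (k α / ⟪X s, α⟫) • α)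
    (hY : ∀ t ∈ Set.Icc (0 : ℝ) T,
      Y t = x₀ + b t + ∫ s in (0 : ℝ)..t, ∑ α ∈ Rp, (k α / ⟪Y s, α⟫) • α) :
    ∀ t ∈ Set.Icc (0 : ℝ) T, X t = Y t := by
  have hkRp : ∀ α ∈ Rp, 0 ≤ k α := fun α hα => hk0 α (hRp.1 hα)
  have hXC' : ∀ t ∈ Set.Icc (0 : ℝ) T, ∀ α ∈ Rp, 0 < ⟪α, X t⟫ := hXC
  have hYC' : ∀ t ∈ Set.Icc (0 : ℝ) T, ∀ α ∈ Rp, 0 < ⟪α, Y t⟫ := hYC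
  have h0 : (0:ℝ) ∈ Set.Icc (0:ℝ) T := ⟨le_rfl, hT.le⟩
  have hXY0 : X 0 = Y 0 := by
    rw [hX 0 h0, hY 0 h0, intervalIntegral.integral_same, intervalIntegral.integral_same]
  have contF : ∀ (W : ℝ → EuclideanSpace ℝ (Fin n)), ContinuousOn W (Set.Icc 0 T) →
      (∀ t ∈ Set.Icc (0 : ℝ) T, ∀ α ∈ Rp, 0 < ⟪α, W t⟫) →
      ContinuousOn (fun s => ∑ α ∈ Rp, (k α / ⟪W s, α⟫) • α) (Set.Icc 0 T) := by
    intro W hWc hWC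
    apply continuousOn_finset_sum
    intro α hα
    apply ContinuousOn.fun_smul _ continuousOn_const
    exact continuousOn_const.div (hWc.inner continuousOn_const)
      (fun s hs => by rw [real_inner_comm]; exact (hWC s hs α hα).ne')
  have hZ : ∀ t ∈ Set.Icc (0 : ℝ) T,
      X t - Y t = ∫ s in (0 : ℝ)..t,
        ∑ α ∈ Rp, ((k α / ⟪X s, α⟫ - k α / ⟪Y s, α⟫) • α) := by
    intro t ht
    have hsub : Set.uIcc (0:ℝ) t ⊆ Set.Icc 0 T := by
      rw [Set.uIcc_of_le ht.1]; exact Set.Icc_subset_Icc le_rfl ht.2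
    have hXint : IntervalIntegrable (fun s => ∑ α ∈ Rp, (k α / ⟪X s, α⟫) • α)
        MeasureTheory.volume 0 t := ((contF X hXcont hXC').mono hsub).intervalIntegrable
    have hYint : IntervalIntegrable (fun s => ∑ α ∈ Rp, (k α / ⟪Y s, α⟫) • α)
        MeasureTheory.volume 0 t := ((contF Y hYcont hYC').mono hsub).intervalIntegrable
    rw [hX t ht, hY t ht]
    have harr : ∀ A B : EuclideanSpace ℝ (Fin n),
        (x₀ + b t + A) - (x₀ + b t + B) = A - B := by intro A B; abel
    rw [harr, ← intervalIntegral.integral_sub hXint hYint]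
    apply intervalIntegral.integral_congr
    intro s _
    simp [sub_smul, Finset.sum_sub_distrib]
  exact radial_dunkl_drift_pathwise_uniqueness_aux Rp k hkRp T hT X Y hXcont hYcont
    hXC' hYC' hXY0 hZ
end
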